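/- The sequence x_n, x_{n-1}, ..., x_{n-t} is a filter-regular sequence for S/I if and only if c_i(I) < ∞ for all i = 0,...,t. -/

import Mathlib

open MvPolynomial

noncomputable section

/-- Coercion of a natural number into `WithBot ℕ∞` (degrees, with `⊥ = -∞`, `⊤ = ∞`). -/
def natW (r : ℕ) : WithBot ℕ∞ := ((r : ℕ∞) : WithBot ℕ∞)

/-- The total degree `|a|` of an exponent vector. -/
def degOf {n : ℕ} (a : Fin n →₀ ℕ) : ℕ := a.sum fun _ e => e

variable {k : Type*} [Field k] {n : ℕ}

/-- The top degree in which the graded pieces of two ideals differ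
(`⊥` if they never differ, `⊤` if they differ in unboundedly many degrees). -/
def topDiff (I J : Ideal (MvPolynomial (Fin n) k)) : WithBot ℕ∞ :=
  sSup {x | ∃ r : ℕ, x = natW r ∧
    ¬ ∀ f : MvPolynomial (Fin n) k, f.IsHomogeneous r → (f ∈ I ↔ f ∈ J)}

/-- `I` is a homogeneous (graded) ideal. -/
def HomogIdeal (I : Ideal (MvPolynomial (Fin n) k)) : Prop :=
  ∀ f ∈ I, ∀ r : ℕ, homogeneousComponent r f ∈ I

/-- The maximal homogeneous ideal `𝔪 = (x₁, …, xₙ)`. -/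
def maxIdl (k : Type*) [Field k] (n : ℕ) : Ideal (MvPolynomial (Fin n) k) :=
  Ideal.span (Set.range X)

/-- The ideal `(I, z₁, …, z_i)`. -/
def partIdeal (I : Ideal (MvPolynomial (Fin n) k)) {m : ℕ}
    (z : Fin m → MvPolynomial (Fin n) k) (i : ℕ) : Ideal (MvPolynomial (Fin n) k) :=
  I ⊔ Ideal.span (z '' {j : Fin m | (j : ℕ) < i})

/-- `a_z^i(S/I) = sup { r : [(I,z₁,…,z_i) : z_{i+1}]_r ≠ (I,z₁,…,z_i)_r }`. -/
def aInv (I : Ideal (MvPolynomial (Fin n) k)) {m : ℕ}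
    (z : Fin m → MvPolynomial (Fin n) k) (i : Fin m) : WithBot ℕ∞ :=
  topDiff ((partIdeal I z (i : ℕ)).colon (Ideal.span {z i})) (partIdeal I z (i : ℕ))

/-- `z` is a filter-regular sequence for `S/I`: each `z_{i+1}` avoids every associated
prime of `(I,z₁,…,z_i)` other than the maximal homogeneous ideal. -/
def FilterRegular (I : Ideal (MvPolynomial (Fin n) k)) {m : ℕ}
    (z : Fin m → MvPolynomial (Fin n) k) : Prop :=
  ∀ i : Fin m, ∀ p : Ideal (MvPolynomial (Fin n) k),
    IsAssociatedPrime p (MvPolynomial (Fin n) k ⧸ partIdeal I z (i : ℕ)) →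
    p ≠ maxIdl k n → z i ∉ p

/-- The saturation `⋃_{m ≥ 1} (J : z^m)`. -/
def satIdeal (J : Ideal (MvPolynomial (Fin n) k)) (z : MvPolynomial (Fin n) k) :
    Ideal (MvPolynomial (Fin n) k) :=
  ⨆ m : ℕ, J.colon (Ideal.span {z ^ (m + 1)})

/-- `a <_drevlex b` for the degree reverse lexicographic order with `x₁ > x₂ > … > xₙ`. -/
def RevLexLT {n : ℕ} (a b : Fin n →₀ ℕ) : Prop :=
  degOf a < degOf b ∨
    (degOf a = degOf b ∧ ∃ j : Fin n, b j < a j ∧ ∀ l : Fin n, j < l → a l = b l)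

/-- The initial ideal of `I` with respect to the reverse lexicographic order:
the ideal generated by the leading monomials of the nonzero elements of `I`. -/
def initialIdeal (I : Ideal (MvPolynomial (Fin n) k)) : Ideal (MvPolynomial (Fin n) k) :=
  Ideal.span {g | ∃ f ∈ I, f ≠ 0 ∧ ∃ μ ∈ f.support,
    (∀ ν ∈ f.support, ν = μ ∨ RevLexLT ν μ) ∧ g = monomial μ (1 : k)}

/-- The evaluation `x_{n-i+1} = ⋯ = x_n = 0`. -/
def evalZero (k : Type*) [Field k] (n i : ℕ) :
    MvPolynomial (Fin n) k →ₐ[k] MvPolynomial (Fin n) k :=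
  aeval fun j : Fin n => if (j : ℕ) < n - i then X j else 0

/-- The evaluation `x_{n-i+1} = ⋯ = x_n = 0`, `x_{n-i} = 1`. -/
def evalOne (k : Type*) [Field k] (n i : ℕ) :
    MvPolynomial (Fin n) k →ₐ[k] MvPolynomial (Fin n) k :=
  aeval fun j : Fin n =>
    if (j : ℕ) < n - i - 1 then X j else if (j : ℕ) = n - i - 1 then 1 else 0

/-- `J_i`: the ideal obtained from `In(I)` by evaluating `x_{n-i+1} = ⋯ = x_n = 0`. -/
def Jlow (i : ℕ) (I : Ideal (MvPolynomial (Fin n) k)) : Ideal (MvPolynomial (Fin n) k) :=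
  Ideal.map (evalZero k n i) (initialIdeal I)

/-- `J̃_i`: the ideal obtained from `J_i` by the further evaluation `x_{n-i} = 1`. -/
def Jtil (i : ℕ) (I : Ideal (MvPolynomial (Fin n) k)) : Ideal (MvPolynomial (Fin n) k) :=
  Ideal.map (evalOne k n i) (initialIdeal I)

/-- `c_i(I) = sup { r : (J̃_i/J_i)_r ≠ 0 }`, computed in `S_i = k[x₁,…,x_{n-i}]`. -/
def cInv (i : ℕ) (I : Ideal (MvPolynomial (Fin n) k)) : WithBot ℕ∞ :=
  sSup {x | ∃ r : ℕ, x = natW r ∧ ∃ f : MvPolynomial (Fin n) k,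
    f ∈ Jtil i I ∧ f ∈ supported k {j : Fin n | (j : ℕ) < n - i} ∧
    f.IsHomogeneous r ∧ f ∉ Jlow i I}

/-- `r(I) = sup { r : (S_d/J_d)_r ≠ 0 }`. -/
def rInv (d : ℕ) (I : Ideal (MvPolynomial (Fin n) k)) : WithBot ℕ∞ :=
  sSup {x | ∃ r : ℕ, x = natW r ∧ ∃ f : MvPolynomial (Fin n) k,
    f ∈ supported k {j : Fin n | (j : ℕ) < n - d} ∧ f.IsHomogeneous r ∧ f ∉ Jlow d I}

/-- The partial regularity `reg_t(S/I)`, via its characterization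
`reg_t(S/I) = max_i a_z^i(S/I)` for any filter-regular sequence `z` of `t+1` linear forms
([T1, Proposition 2.2]; equal to `max { aᵢ(S/I) + i : i ≤ t }` in terms of local cohomology). -/
def regT (t : ℕ) (I : Ideal (MvPolynomial (Fin n) k)) : WithBot ℕ∞ :=
  sSup {x | ∃ z : Fin (t + 1) → MvPolynomial (Fin n) k,
    (∀ j, (z j).IsHomogeneous 1) ∧ FilterRegular I z ∧
    x = ⨆ i : Fin (t + 1), aInv I z i}

/-- The Castelnuovo–Mumford regularity `reg(S/I)`, via its characterization
`reg(S/I) = max { a_z^0, …, a_z^{d-1}, r_z(S/I) }` for any filter-regular sequence `z`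
of `d = dim S/I` linear forms ([BS, Theorem 1.10], [T1, Corollary 3.3]). -/
def regCM (I : Ideal (MvPolynomial (Fin n) k)) : WithBot ℕ∞ :=
  sSup {x | ∃ d : ℕ, ringKrullDim (MvPolynomial (Fin n) k ⧸ I) = natW d ∧
    ∃ z : Fin d → MvPolynomial (Fin n) k,
      (∀ j, (z j).IsHomogeneous 1) ∧ FilterRegular I z ∧
      x = (⨆ i : Fin d, aInv I z i) ⊔ topDiff ⊤ (I ⊔ Ideal.span (Set.range z))}

/-- The exponent vectors of the minimal monomial generators of a monomial ideal. -/
def minGens (I : Ideal (MvPolynomial (Fin n) k)) : Set (Fin n →₀ ℕ) :=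
  {μ | monomial μ (1 : k) ∈ I ∧
    ∀ ν : Fin n →₀ ℕ, monomial ν (1 : k) ∈ I → ν ≤ μ → ν = μ}

/-- `E_i`: the exponent vectors of the minimal generators of `In(I)` involving none of
the variables `x_{n-i+1}, …, x_n`. -/
def Evar (i : ℕ) (I : Ideal (MvPolynomial (Fin n) k)) : Set (Fin n →₀ ℕ) :=
  {μ ∈ minGens (initialIdeal I) | ∀ j : Fin n, n - i ≤ (j : ℕ) → μ j = 0}

/-- The set `F` of corners of the staircase determined by `E`:
vectors `a = max(v₁,…,v_s) - (1,…,1)` where `v j ∈ E`, the `j`-th coordinate of `v j`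
strictly exceeds that of `v h` for `h ≠ j`, and `a ≱ w` for all `w ∈ E`. -/
def corners {s : ℕ} (E : Set (Fin s →₀ ℕ)) : Set (Fin s →₀ ℕ) :=
  {a | (∃ v : Fin s → (Fin s →₀ ℕ), (∀ j, v j ∈ E) ∧
      (∀ j h : Fin s, h ≠ j → v h j < v j j) ∧
      ∀ l : Fin s, a l + 1 = Finset.univ.sup fun j => v j l) ∧
    ∀ w ∈ E, ¬ w ≤ a}
-- Stage 1: revlex order, leading monomials, monomial ideals
section Stage1
variable {k : Type*} [Field k] {n : ℕ}

lemma degOf_eq_degree {n : ℕ} (a : Fin n →₀ ℕ) : degOf a = Finsupp.degree a := rfl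

lemma isHom_iff {f : MvPolynomial (Fin n) k} {r : ℕ} :
    f.IsHomogeneous r ↔ ∀ d ∈ f.support, degOf d = r := by
  constructor
  · intro h d hd
    have := h (MvPolynomial.mem_support_iff.mp hd)
    simp only [degOf_eq_degree, Finsupp.degree]
    rw [← this]
    simp [Finsupp.weight_apply, Finsupp.sum, mul_comm]
    rfl
  · intro h d hd
    have := h d (MvPolynomial.mem_support_iff.mpr hd)
    rw [Finsupp.weight_apply]
    simp only [degOf_eq_degree, Finsupp.degree] at this
    rw [← this]
    simp [Finsupp.sum, mul_comm]
    rfl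

lemma degOf_add {n : ℕ} (a b : Fin n →₀ ℕ) : degOf (a + b) = degOf a + degOf b := by
  classical
  simp only [degOf]
  rw [Finsupp.sum_add_index] <;> simp

-- trichotomy for RevLexLT
lemma rl_trichot {n : ℕ} (a b : Fin n →₀ ℕ) : RevLexLT a b ∨ a = b ∨ RevLexLT b a := by
  rcases lt_trichotomy (degOf a) (degOf b) with h | h | h
  · exact Or.inl (Or.inl h)
  · by_cases hab : a = b
    · exact Or.inr (Or.inl hab)
    · -- find largest differing index
      have hne : ∃ j : Fin n, a j ≠ b j := by
        by_contra hc
        push_neg at hc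
        exact hab (Finsupp.ext hc)
      classical
      obtain ⟨j, hj⟩ := hne
      -- the set of differing indices is a nonempty finset of Fin n
      have hfin : (Finset.univ.filter (fun l : Fin n => a l ≠ b l)).Nonempty :=
        ⟨j, by simp [hj]⟩
      set J := (Finset.univ.filter (fun l : Fin n => a l ≠ b l)).max' hfin with hJ
      have hJmem : a J ≠ b J := by
        have := (Finset.univ.filter (fun l : Fin n => a l ≠ b l)).max'_mem hfin
        simpa [hJ] using (Finset.mem_filter.mp this).2
      have hJmax : ∀ l : Fin n, J < l → a l = b l := by
        intro l hl
        by_contra hc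
        have : l ∈ Finset.univ.filter (fun l : Fin n => a l ≠ b l) := by simp [hc]
        exact absurd (Finset.le_max' _ _ this) (not_le.mpr hl)
      rcases lt_or_gt_of_ne hJmem with hlt | hgt
      · exact Or.inr (Or.inr (Or.inr ⟨h.symm, J, hlt, fun l hl => (hJmax l hl).symm⟩))
      · exact Or.inl (Or.inr ⟨h, J, hgt, hJmax⟩)
  · exact Or.inr (Or.inr (Or.inl h))

lemma rl_irrefl {n : ℕ} (a : Fin n →₀ ℕ) : ¬ RevLexLT a a := by
  rintro (h | ⟨-, j, hj, -⟩)
  · exact lt_irrefl _ h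
  · exact lt_irrefl _ hj

lemma rl_trans {n : ℕ} {a b c : Fin n →₀ ℕ} (h1 : RevLexLT a b) (h2 : RevLexLT b c) :
    RevLexLT a c := by
  rcases h1 with h1 | ⟨hd1, j1, hj1, hmax1⟩
  · rcases h2 with h2 | ⟨hd2, _⟩
    · exact Or.inl (h1.trans h2)
    · exact Or.inl (hd2 ▸ h1)
  · rcases h2 with h2 | ⟨hd2, j2, hj2, hmax2⟩
    · exact Or.inl (hd1 ▸ h2)
    · refine Or.inr ⟨hd1.trans hd2, ?_⟩
      rcases lt_trichotomy j1 j2 with hj | hj | hj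
      · -- j2 is larger: beyond j2 all equal; at j2: a j2 = b j2 < c j2
        refine ⟨j2, ?_, fun l hl => (hmax1 l (hj.trans hl)).trans (hmax2 l hl)⟩
        rw [hmax1 j2 hj]; exact hj2
      · subst hj
        exact ⟨j1, lt_trans hj2 hj1, fun l hl => (hmax1 l hl).trans (hmax2 l hl)⟩
      · refine ⟨j1, ?_, fun l hl => (hmax1 l hl).trans (hmax2 l (hj.trans hl))⟩
        rw [← hmax2 j1 hj]; exact hj1

lemma rl_asymm {n : ℕ} {a b : Fin n →₀ ℕ} (h : RevLexLT a b) : ¬ RevLexLT b a :=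
  fun h' => rl_irrefl a (rl_trans h h')

lemma rl_add_right {n : ℕ} {a b : Fin n →₀ ℕ} (c : Fin n →₀ ℕ) (h : RevLexLT a b) :
    RevLexLT (a + c) (b + c) := by
  rcases h with h | ⟨hd, j, hj, hmax⟩
  · exact Or.inl (by rw [degOf_add, degOf_add]; omega)
  · refine Or.inr ⟨by rw [degOf_add, degOf_add]; omega, j, ?_, fun l hl => ?_⟩
    · simp only [Finsupp.add_apply]; omega
    · simp only [Finsupp.add_apply, hmax l hl]

/-- `IsLM f μ`: μ is the revlex-leading monomial of `f`. -/
def IsLM {n : ℕ} (f : MvPolynomial (Fin n) k) (μ : Fin n →₀ ℕ) : Prop :=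
  μ ∈ f.support ∧ ∀ ν ∈ f.support, ν = μ ∨ RevLexLT ν μ

lemma exists_isLM {f : MvPolynomial (Fin n) k} (hf : f ≠ 0) : ∃ μ, IsLM f μ := by
  classical
  have hne : f.support.Nonempty := MvPolynomial.support_nonempty.mpr hf
  -- finset max w.r.t. RevLexLT by induction
  have : ∀ (t : Finset (Fin n →₀ ℕ)), t.Nonempty → ∃ μ ∈ t, ∀ ν ∈ t, ν = μ ∨ RevLexLT ν μ := by
    intro t
    induction t using Finset.induction with
    | empty => intro h; exact absurd h (by simp)
    | @insert x t2 hx ih =>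
      intro _
      rcases t2.eq_empty_or_nonempty with rfl | hs
      · exact ⟨x, by simp, by simp⟩
      · obtain ⟨μ, hμs, hμmax⟩ := ih hs
        rcases rl_trichot x μ with h | h | h
        · refine ⟨μ, Finset.mem_insert_of_mem hμs, ?_⟩
          intro ν hν
          rcases Finset.mem_insert.mp hν with rfl | hν
          · exact Or.inr h
          · exact hμmax ν hν
        · subst h
          exact ⟨x, Finset.mem_insert_self _ _, fun ν hν => by
            rcases Finset.mem_insert.mp hν with rfl | hν
            · exact Or.inl rfl
            · exact hμmax ν hν⟩
        · refine ⟨x, Finset.mem_insert_self _ _, ?_⟩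
          intro ν hν
          rcases Finset.mem_insert.mp hν with rfl | hν
          · exact Or.inl rfl
          · rcases hμmax ν hν with rfl | hν'
            · exact Or.inr h
            · exact Or.inr (rl_trans hν' h)
  obtain ⟨μ, hμ, hmax⟩ := this f.support hne
  exact ⟨μ, hμ, hmax⟩

lemma isLM_unique {f : MvPolynomial (Fin n) k} {μ₁ μ₂ : Fin n →₀ ℕ}
    (h1 : IsLM f μ₁) (h2 : IsLM f μ₂) : μ₁ = μ₂ := by
  rcases h2.2 μ₁ h1.1 with h | h
  · exact h
  · rcases h1.2 μ₂ h2.1 with h' | h'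
    · exact h'.symm
    · exact absurd h' (rl_asymm h)

end Stage1
-- Stage 2: monomial ideals and initial ideal structure
section Stage2
variable {k : Type*} [Field k] {n : ℕ}

/-- span of monomials with exponents in `A`. -/
def MIdeal (k : Type*) [Field k] {n : ℕ} (A : Set (Fin n →₀ ℕ)) : Ideal (MvPolynomial (Fin n) k) :=
  Ideal.span ((fun μ => monomial μ (1 : k)) '' A)

lemma support_monomial_mul (τ : Fin n →₀ ℕ) (f : MvPolynomial (Fin n) k) (ν : Fin n →₀ ℕ) :
    ν ∈ (monomial τ (1 : k) * f).support ↔ ∃ σ ∈ f.support, ν = τ + σ := by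
  classical
  rw [MvPolynomial.mem_support_iff, MvPolynomial.coeff_monomial_mul']
  constructor
  · intro h
    by_cases hle : τ ≤ ν
    · refine ⟨ν - τ, ?_, ?_⟩
      · rw [MvPolynomial.mem_support_iff]; intro hc; rw [if_pos hle, hc] at h; simp at h
      · ext j; have := hle j; simp only [Finsupp.add_apply, Finsupp.tsub_apply]; omega
    · rw [if_neg hle] at h; simp at h
  · rintro ⟨σ, hσ, rfl⟩
    rw [if_pos le_self_add, add_tsub_cancel_left, one_mul]
    exact MvPolynomial.mem_support_iff.mp hσ

lemma mem_MIdeal_iff {A : Set (Fin n →₀ ℕ)} {f : MvPolynomial (Fin n) k} :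
    f ∈ MIdeal k A ↔ ∀ ν ∈ f.support, ∃ μ ∈ A, μ ≤ ν := by
  classical
  constructor
  · intro hf
    refine Submodule.span_induction ?_ ?_ ?_ ?_ hf
    · rintro g ⟨μ, hμ, rfl⟩ ν hν
      rw [MvPolynomial.support_monomial, if_neg (one_ne_zero)] at hν
      simp only [Finset.mem_singleton] at hν
      exact ⟨μ, hμ, hν ▸ le_refl μ⟩
    · intro ν hν; simp at hν
    · intro g h _ _ ihg ihh ν hν
      have := MvPolynomial.support_add hν
      rcases Finset.mem_union.mp this with h' | h'
      · exact ihg ν h'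
      · exact ihh ν h'
    · intro r g _ ihg ν hν
      have : ν ∈ (r * g).support := hν
      have hsub := MvPolynomial.support_mul r g this
      rw [Finset.mem_add] at hsub
      obtain ⟨a, ha, b, hb, rfl⟩ := hsub
      obtain ⟨μ, hμ, hle⟩ := ihg b hb
      exact ⟨μ, hμ, hle.trans le_add_self⟩
  · intro h
    rw [show f = ∑ ν ∈ f.support, monomial ν (MvPolynomial.coeff ν f) from
      (MvPolynomial.support_sum_monomial_coeff f).symm]
    refine Ideal.sum_mem _ fun ν hν => ?_
    obtain ⟨μ, hμ, hle⟩ := h ν hν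
    have : monomial ν (MvPolynomial.coeff ν f) =
        monomial (ν - μ) (MvPolynomial.coeff ν f) * monomial μ (1 : k) := by
      rw [MvPolynomial.monomial_mul, mul_one, tsub_add_cancel_of_le hle]
    rw [this]
    exact Ideal.mul_mem_left _ _ (Ideal.subset_span ⟨μ, hμ, rfl⟩)

lemma monomial_mem_MIdeal {A : Set (Fin n →₀ ℕ)} {ν : Fin n →₀ ℕ} :
    monomial ν (1 : k) ∈ MIdeal k A ↔ ∃ μ ∈ A, μ ≤ ν := by
  classical
  rw [mem_MIdeal_iff]
  constructor
  · intro h; exact h ν (by rw [MvPolynomial.support_monomial, if_neg one_ne_zero]; simp)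
  · intro h σ hσ
    rw [MvPolynomial.support_monomial, if_neg one_ne_zero] at hσ
    simp only [Finset.mem_singleton] at hσ
    exact hσ ▸ h

/-- The set of leading exponents of a (nonzero elements of an) ideal. -/
def LMset (I : Ideal (MvPolynomial (Fin n) k)) : Set (Fin n →₀ ℕ) :=
  {μ | ∃ f ∈ I, f ≠ 0 ∧ IsLM f μ}

lemma initialIdeal_eq_MIdeal (I : Ideal (MvPolynomial (Fin n) k)) :
    initialIdeal I = MIdeal k (LMset I) := by
  unfold initialIdeal MIdeal
  congr 1
  ext g
  constructor
  · rintro ⟨f, hf, hf0, μ, hμ, hmax, rfl⟩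
    exact ⟨μ, ⟨f, hf, hf0, hμ, hmax⟩, rfl⟩
  · rintro ⟨μ, ⟨f, hf, hf0, hμ, hmax⟩, rfl⟩
    exact ⟨f, hf, hf0, μ, hμ, hmax, rfl⟩

lemma isLM_monomial_mul {f : MvPolynomial (Fin n) k} {μ : Fin n →₀ ℕ} (h : IsLM f μ)
    (τ : Fin n →₀ ℕ) : IsLM (monomial τ (1 : k) * f) (τ + μ) := by
  constructor
  · rw [support_monomial_mul]; exact ⟨μ, h.1, rfl⟩
  · intro ν hν
    rw [support_monomial_mul] at hν
    obtain ⟨σ, hσ, rfl⟩ := hν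
    rcases h.2 σ hσ with rfl | hlt
    · exact Or.inl rfl
    · right
      have := rl_add_right τ hlt
      simpa [add_comm] using this

lemma LMset_add_mem {I : Ideal (MvPolynomial (Fin n) k)} {μ : Fin n →₀ ℕ} (hμ : μ ∈ LMset I)
    (τ : Fin n →₀ ℕ) : τ + μ ∈ LMset I := by
  obtain ⟨f, hf, hf0, hlm⟩ := hμ
  refine ⟨monomial τ 1 * f, Ideal.mul_mem_left _ _ hf, ?_, isLM_monomial_mul hlm τ⟩
  intro hc
  have : (τ + μ) ∈ (monomial τ (1:k) * f).support := (isLM_monomial_mul hlm τ).1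
  rw [hc] at this; simp at this

lemma monomial_mem_initialIdeal {I : Ideal (MvPolynomial (Fin n) k)} {ν : Fin n →₀ ℕ} :
    monomial ν (1 : k) ∈ initialIdeal I ↔ ∃ μ ∈ LMset I, μ ≤ ν := by
  classical
  rw [initialIdeal_eq_MIdeal, monomial_mem_MIdeal]

lemma mem_initialIdeal_iff {I : Ideal (MvPolynomial (Fin n) k)} {f : MvPolynomial (Fin n) k} :
    f ∈ initialIdeal I ↔ ∀ ν ∈ f.support, ∃ μ ∈ LMset I, μ ≤ ν := by
  rw [initialIdeal_eq_MIdeal, mem_MIdeal_iff]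

end Stage2
-- Stage 3: homogeneity infrastructure
section Stage3
variable {k : Type*} [Field k] {n : ℕ}

lemma isHom_sub {f g : MvPolynomial (Fin n) k} {r : ℕ} (hf : f.IsHomogeneous r)
    (hg : g.IsHomogeneous r) : (f - g).IsHomogeneous r := by
  rw [sub_eq_add_neg]; exact hf.add hg.neg

lemma isHom_monomial (ν : Fin n →₀ ℕ) (c : k) : (monomial ν c).IsHomogeneous (degOf ν) :=
  MvPolynomial.isHomogeneous_monomial c rfl

lemma support_subset_isHom {f g : MvPolynomial (Fin n) k} {r : ℕ} (hf : f.IsHomogeneous r)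
    (h : g.support ⊆ f.support) : g.IsHomogeneous r := by
  rw [isHom_iff] at hf ⊢
  exact fun d hd => hf d (h hd)

lemma homComp_support (r : ℕ) (f : MvPolynomial (Fin n) k) {d : Fin n →₀ ℕ} :
    MvPolynomial.coeff d (homogeneousComponent r f) =
      if degOf d = r then MvPolynomial.coeff d f else 0 := by
  rw [MvPolynomial.coeff_homogeneousComponent]
  rfl

lemma homComp_of_isHom {f : MvPolynomial (Fin n) k} {r : ℕ} (hf : f.IsHomogeneous r) :
    homogeneousComponent r f = f := by
  ext d
  rw [homComp_support]
  split_ifs with h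
  · rfl
  · by_contra hc
    exact h ((isHom_iff.mp hf) d (MvPolynomial.mem_support_iff.mpr fun hc' => hc hc'.symm))

lemma HomogIdeal.sup {A B : Ideal (MvPolynomial (Fin n) k)} (hA : HomogIdeal A)
    (hB : HomogIdeal B) : HomogIdeal (A ⊔ B) := by
  intro f hf r
  obtain ⟨a, ha, b, hb, rfl⟩ := Submodule.mem_sup.mp hf
  rw [map_add]
  exact Submodule.add_mem_sup (hA a ha r) (hB b hb r)

lemma HomogIdeal.mIdeal (A : Set (Fin n →₀ ℕ)) : HomogIdeal (MIdeal k A) := by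
  intro f hf r
  rw [mem_MIdeal_iff] at hf ⊢
  intro ν hν
  refine hf ν ?_
  have : MvPolynomial.coeff ν (homogeneousComponent r f) ≠ 0 := MvPolynomial.mem_support_iff.mp hν
  rw [homComp_support] at this
  split_ifs at this with h
  · exact MvPolynomial.mem_support_iff.mpr this
  · simp at this

/-- homogeneous leading-monomial representative. -/
lemma LMset_homog_rep {I : Ideal (MvPolynomial (Fin n) k)} (hI : HomogIdeal I)
    {μ : Fin n →₀ ℕ} (hμ : μ ∈ LMset I) :
    ∃ f ∈ I, f ≠ 0 ∧ f.IsHomogeneous (degOf μ) ∧ IsLM f μ := by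
  obtain ⟨f, hf, hf0, hlm⟩ := hμ
  refine ⟨homogeneousComponent (degOf μ) f, hI f hf _, ?_, homogeneousComponent_isHomogeneous _ _, ?_, ?_⟩
  · intro hc
    have : MvPolynomial.coeff μ (homogeneousComponent (degOf μ) f) ≠ 0 := by
      rw [homComp_support, if_pos rfl]
      exact MvPolynomial.mem_support_iff.mp hlm.1
    rw [hc] at this; simp at this
  · rw [MvPolynomial.mem_support_iff, homComp_support, if_pos rfl]
    exact MvPolynomial.mem_support_iff.mp hlm.1
  · intro ν hν
    have : ν ∈ f.support := by
      rw [MvPolynomial.mem_support_iff] at hν ⊢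
      rw [homComp_support] at hν
      split_ifs at hν with h
      · exact hν
      · simp at hν
    exact hlm.2 ν this

/-- graded description of initial ideal for homogeneous ideals. -/
lemma monomial_mem_initialIdeal_homog {I : Ideal (MvPolynomial (Fin n) k)} (hI : HomogIdeal I)
    {ν : Fin n →₀ ℕ} (h : monomial ν (1 : k) ∈ initialIdeal I) :
    ∃ g ∈ I, g ≠ 0 ∧ g.IsHomogeneous (degOf ν) ∧ IsLM g ν := by
  obtain ⟨μ, hμ, hle⟩ := monomial_mem_initialIdeal.mp h
  obtain ⟨f, hf, hf0, hfhom, hflm⟩ := LMset_homog_rep hI hμ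
  refine ⟨monomial (ν - μ) 1 * f, Ideal.mul_mem_left _ _ hf, ?_, ?_, ?_⟩
  · intro hc
    have h1 : IsLM (monomial (ν - μ) (1:k) * f) ((ν - μ) + μ) := isLM_monomial_mul hflm _
    rw [hc] at h1
    exact absurd h1.1 (by simp)
  · have : ((monomial (ν - μ) (1:k)) * f).IsHomogeneous (degOf (ν - μ) + degOf μ) :=
      (isHom_monomial _ _).mul hfhom
    have he : degOf (ν - μ) + degOf μ = degOf ν := by
      rw [← degOf_add, tsub_add_cancel_of_le hle]
    exact he ▸ this
  · have h1 : IsLM (monomial (ν - μ) (1:k) * f) ((ν - μ) + μ) := isLM_monomial_mul hflm _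
    rwa [tsub_add_cancel_of_le hle] at h1

/-- LM of elements of I lies in initialIdeal I. -/
lemma isLM_mem_initialIdeal {I : Ideal (MvPolynomial (Fin n) k)} {f : MvPolynomial (Fin n) k}
    {μ : Fin n →₀ ℕ} (hf : f ∈ I) (hf0 : f ≠ 0) (hlm : IsLM f μ) :
    monomial μ (1 : k) ∈ initialIdeal I :=
  monomial_mem_initialIdeal.mpr ⟨μ, ⟨f, hf, hf0, hlm⟩, le_refl μ⟩

lemma initialIdeal_mono {A B : Ideal (MvPolynomial (Fin n) k)} (h : A ≤ B) :
    initialIdeal A ≤ initialIdeal B := by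
  rw [initialIdeal_eq_MIdeal, initialIdeal_eq_MIdeal]
  refine Ideal.span_mono (Set.image_mono ?_)
  rintro μ ⟨f, hf, hf0, hlm⟩
  exact ⟨f, h hf, hf0, hlm⟩

end Stage3
-- Stage 4: degreewise reduction (Macaulay-type transfer)
section Stage4
variable {k : Type*} [Field k] {n : ℕ}

/-- the constant exponent vector with all entries `r`. -/
def constExp (n r : ℕ) : Fin n →₀ ℕ := Finsupp.equivFunOnFinite.symm (fun _ => r)

lemma le_constExp {r : ℕ} {d : Fin n →₀ ℕ} (h : degOf d = r) : d ≤ constExp n r := by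
  intro j
  have := Finsupp.le_degree j d
  rw [← degOf_eq_degree, h] at this
  simpa [constExp] using this

open Classical in
/-- measure: size of the revlex-downward closure of the support. -/
noncomputable def msr (r : ℕ) (f : MvPolynomial (Fin n) k) : ℕ :=
  ((Finset.Iic (constExp n r)).filter
    (fun ν => ∃ σ ∈ f.support, ν = σ ∨ RevLexLT ν σ)).card

lemma reduce_initial {A B : Ideal (MvPolynomial (Fin n) k)} (hB : HomogIdeal B) (hBA : B ≤ A)
    (r : ℕ)
    (Hin : ∀ ν : Fin n →₀ ℕ, degOf ν = r → monomial ν (1 : k) ∈ initialIdeal A →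
      monomial ν (1 : k) ∈ initialIdeal B) :
    ∀ f : MvPolynomial (Fin n) k, f.IsHomogeneous r → f ∈ A → f ∈ B := by
  classical
  suffices h : ∀ m : ℕ, ∀ f : MvPolynomial (Fin n) k, msr r f ≤ m →
      f.IsHomogeneous r → f ∈ A → f ∈ B by
    intro f hf hfA; exact h (msr r f) f le_rfl hf hfA
  intro m
  induction m with
  | zero =>
    intro f hm hf hfA
    by_cases hf0 : f = 0
    · exact hf0 ▸ B.zero_mem
    · exfalso
      obtain ⟨μ, hlm⟩ := exists_isLM hf0
      have hdeg : degOf μ = r := isHom_iff.mp hf μ hlm.1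
      have hpos : 0 < msr r f := by
        unfold msr
        refine Finset.card_pos.mpr ⟨μ, ?_⟩
        rw [Finset.mem_filter, Finset.mem_Iic]
        exact ⟨le_constExp hdeg, μ, hlm.1, Or.inl rfl⟩
      omega
  | succ m ih =>
    intro f hm hf hfA
    by_cases hf0 : f = 0
    · exact hf0 ▸ B.zero_mem
    obtain ⟨μ, hlm⟩ := exists_isLM hf0
    have hdeg : degOf μ = r := isHom_iff.mp hf μ hlm.1
    have hμA : monomial μ (1 : k) ∈ initialIdeal A := isLM_mem_initialIdeal hfA hf0 hlm
    obtain ⟨g, hgB, hg0, hghom, hglm⟩ :=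
      monomial_mem_initialIdeal_homog hB (Hin μ hdeg hμA)
    rw [hdeg] at hghom
    set c : k := MvPolynomial.coeff μ f / MvPolynomial.coeff μ g with hc
    set f' : MvPolynomial (Fin n) k := f - MvPolynomial.C c * g with hf'
    have hgc : MvPolynomial.coeff μ g ≠ 0 := MvPolynomial.mem_support_iff.mp hglm.1
    have hcoeffμ : MvPolynomial.coeff μ f' = 0 := by
      rw [hf', MvPolynomial.coeff_sub, MvPolynomial.coeff_C_mul, hc,
        div_mul_cancel₀ _ hgc, sub_self]
    have hsupp : ∀ ν ∈ f'.support, RevLexLT ν μ := by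
      intro ν hν
      have hνμ : ν ≠ μ := fun hc' => by
        rw [hc'] at hν; exact MvPolynomial.mem_support_iff.mp hν hcoeffμ
      have : ν ∈ f.support ∪ g.support := by
        rw [MvPolynomial.mem_support_iff] at hν
        by_contra hcon
        rw [Finset.mem_union, not_or, MvPolynomial.notMem_support_iff,
          MvPolynomial.notMem_support_iff] at hcon
        apply hν
        rw [hf', MvPolynomial.coeff_sub, MvPolynomial.coeff_C_mul, hcon.1, hcon.2]
        ring
      rcases Finset.mem_union.mp this with h' | h'
      · rcases hlm.2 ν h' with rfl | h'' ; · exact absurd rfl hνμ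
        exact h''
      · rcases hglm.2 ν h' with rfl | h'' ; · exact absurd rfl hνμ
        exact h''
    have hf'A : f' ∈ A := A.sub_mem hfA (Ideal.mul_mem_left _ _ (hBA hgB))
    have hf'hom : f'.IsHomogeneous r := isHom_sub hf (hghom.C_mul c)
    have hmsr : msr r f' < msr r f := by
      unfold msr
      apply Finset.card_lt_card
      rw [Finset.ssubset_iff_of_subset]
      · refine ⟨μ, ?_, ?_⟩
        · rw [Finset.mem_filter, Finset.mem_Iic]
          exact ⟨le_constExp hdeg, μ, hlm.1, Or.inl rfl⟩
        · rw [Finset.mem_filter]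
          rintro ⟨-, σ, hσ, h⟩
          have hσμ : RevLexLT σ μ := hsupp σ hσ
          rcases h with rfl | h
          · exact rl_irrefl μ hσμ
          · exact rl_irrefl μ (rl_trans h hσμ)
      · intro ν hν
        rw [Finset.mem_filter] at hν ⊢
        obtain ⟨h1, σ, hσ, h2⟩ := hν
        refine ⟨h1, μ, hlm.1, Or.inr ?_⟩
        rcases h2 with rfl | h2
        · exact hsupp ν hσ
        · exact rl_trans h2 (hsupp σ hσ)
    have hf'B : f' ∈ B := ih f' (by omega) hf'hom hf'A
    have : f = f' + MvPolynomial.C c * g := by ring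
    rw [this]
    exact B.add_mem hf'B (Ideal.mul_mem_left _ _ hgB)

/-- degreewise equality transfer between ideals and their initial ideals. -/
lemma graded_eq_iff_initial {A B : Ideal (MvPolynomial (Fin n) k)} (hA : HomogIdeal A)
    (hB : HomogIdeal B) (hBA : B ≤ A) (r : ℕ) :
    (∀ f : MvPolynomial (Fin n) k, f.IsHomogeneous r → f ∈ A → f ∈ B) ↔
    (∀ ν : Fin n →₀ ℕ, degOf ν = r → monomial ν (1 : k) ∈ initialIdeal A →
      monomial ν (1 : k) ∈ initialIdeal B) := by
  constructor
  · intro h ν hν hmem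
    obtain ⟨g, hgA, hg0, hghom, hglm⟩ := monomial_mem_initialIdeal_homog hA hmem
    rw [hν] at hghom
    exact isLM_mem_initialIdeal (h g hghom hgA) hg0 hglm
  · intro h
    exact reduce_initial hB hBA r h

end Stage4
-- Stage 5: revlex core lemmas
section Stage5
open scoped Classical
variable {k : Type*} [Field k] {n : ℕ}

/-- `ν` involves a variable of index `> u`. -/
def hasBig {n : ℕ} (u : Fin n) (ν : Fin n →₀ ℕ) : Prop := ∃ w : Fin n, u < w ∧ ν w ≠ 0

lemma maxDiff {a b : Fin n →₀ ℕ} (h : a ≠ b) :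
    ∃ j : Fin n, a j ≠ b j ∧ ∀ l : Fin n, j < l → a l = b l := by
  classical
  have hne : (Finset.univ.filter (fun l : Fin n => a l ≠ b l)).Nonempty := by
    by_contra hc
    rw [Finset.not_nonempty_iff_eq_empty, Finset.filter_eq_empty_iff] at hc
    exact h (Finsupp.ext fun j => by
      have := hc (Finset.mem_univ j); simpa using this)
  refine ⟨(Finset.univ.filter (fun l : Fin n => a l ≠ b l)).max' hne, ?_, ?_⟩
  · have := Finset.max'_mem _ hne
    simpa using (Finset.mem_filter.mp this).2
  · intro l hl
    by_contra hc
    exact absurd (Finset.le_max' _ l (by simp [hc])) (not_le.mpr hl)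

lemma rl_of_hasBig {u : Fin n} {σ μ : Fin n →₀ ℕ} (hdeg : degOf σ = degOf μ)
    (hμ : ∀ w : Fin n, u < w → μ w = 0) (hσ : hasBig u σ) : RevLexLT σ μ := by
  obtain ⟨w, hw, hw0⟩ := hσ
  have hne : σ ≠ μ := fun hc => hw0 (hc ▸ hμ w hw)
  obtain ⟨j, hj, hjmax⟩ := maxDiff hne
  have hju : u < j := by
    by_contra hc
    push_neg at hc
    exact hw0 ((hjmax w (lt_of_le_of_lt hc hw)).trans (hμ w hw))
  refine Or.inr ⟨hdeg, j, ?_, hjmax⟩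
  have := hμ j hju
  omega

lemma rl_of_u {u : Fin n} {σ μ : Fin n →₀ ℕ} (hdeg : degOf σ = degOf μ)
    (hμbig : ∀ w : Fin n, u < w → μ w = 0) (hσbig : ∀ w : Fin n, u < w → σ w = 0)
    (hμu : μ u = 0) (hσu : σ u ≠ 0) : RevLexLT σ μ := by
  refine Or.inr ⟨hdeg, u, by omega, fun l hl => (hσbig l hl).trans (hμbig l hl).symm⟩

/-- G4: divisibility by `x_u` propagates from the leading monomial. -/
lemma divis_of_isLM {f : MvPolynomial (Fin n) k} {μ : Fin n →₀ ℕ} {r : ℕ} {u : Fin n}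
    (hf : f.IsHomogeneous r) (hlm : IsLM f μ) (hμbig : ∀ w : Fin n, u < w → μ w = 0)
    (hμu : μ u ≠ 0) {ν : Fin n →₀ ℕ} (hν : ν ∈ f.support)
    (hνbig : ∀ w : Fin n, u < w → ν w = 0) : ν u ≠ 0 := by
  rcases hlm.2 ν hν with rfl | hlt
  · exact hμu
  · rcases hlt with hlt | ⟨-, j, hj, hjmax⟩
    · exact absurd hlt (by rw [isHom_iff.mp hf ν hν, isHom_iff.mp hf μ hlm.1]; omega)
    · intro hc
      rcases lt_trichotomy j u with h | h | h
      · rw [hjmax u h] at hc; exact hμu hc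
      · subst h; omega
      · rw [hνbig j h] at hj; omega

/-- the part of `f` supported on monomials satisfying `p`. -/
noncomputable def restrictPart {n : ℕ} (p : (Fin n →₀ ℕ) → Prop)
    (f : MvPolynomial (Fin n) k) : MvPolynomial (Fin n) k :=
  ∑ ν ∈ f.support.filter p, monomial ν (MvPolynomial.coeff ν f)

lemma coeff_restrictPart (p : (Fin n →₀ ℕ) → Prop) (f : MvPolynomial (Fin n) k)
    (ν : Fin n →₀ ℕ) :
    MvPolynomial.coeff ν (restrictPart p f) =
      if p ν then MvPolynomial.coeff ν f else 0 := by
  classical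
  unfold restrictPart
  rw [MvPolynomial.coeff_sum]
  simp only [MvPolynomial.coeff_monomial]
  rw [Finset.sum_ite_eq' ]
  by_cases h : p ν
  · by_cases h0 : MvPolynomial.coeff ν f = 0
    · simp [h, h0]
    · simp [h, h0, MvPolynomial.mem_support_iff]
  · simp [h]

lemma restrictPart_add_compl (p : (Fin n →₀ ℕ) → Prop) (f : MvPolynomial (Fin n) k) :
    restrictPart p f + restrictPart (fun ν => ¬ p ν) f = f := by
  classical
  ext ν
  rw [MvPolynomial.coeff_add, coeff_restrictPart, coeff_restrictPart]
  by_cases h : p ν <;> simp [h]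

/-- the big-variable part of `f` belongs to any ideal containing the big variables. -/
lemma restrictBig_mem {P : Ideal (MvPolynomial (Fin n) k)} {u : Fin n}
    (hvars : ∀ w : Fin n, u < w → X w ∈ P) (f : MvPolynomial (Fin n) k) :
    restrictPart (hasBig u) f ∈ P := by
  classical
  unfold restrictPart
  refine Ideal.sum_mem _ fun ν hν => ?_
  obtain ⟨w, hw, hw0⟩ : hasBig u ν := (Finset.mem_filter.mp hν).2
  have : monomial ν (MvPolynomial.coeff ν f) =
      monomial (ν - Finsupp.single w 1) (MvPolynomial.coeff ν f) * X w := by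
    rw [MvPolynomial.X, MvPolynomial.monomial_mul, mul_one, tsub_add_cancel_of_le]
    rw [Finsupp.single_le_iff]; omega
  rw [this]
  exact Ideal.mul_mem_left _ _ (hvars w hw)

/-- division by `x_u`. -/
lemma exists_div_X {u : Fin n} {h : MvPolynomial (Fin n) k}
    (hdiv : ∀ ν ∈ h.support, ν u ≠ 0) :
    ∃ h₃ : MvPolynomial (Fin n) k, h = monomial (Finsupp.single u 1) 1 * h₃ := by
  classical
  refine ⟨∑ ν ∈ h.support, monomial (ν - Finsupp.single u 1) (MvPolynomial.coeff ν h), ?_⟩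
  rw [Finset.mul_sum]
  conv_lhs => rw [← MvPolynomial.support_sum_monomial_coeff h]
  refine Finset.sum_congr rfl fun ν hν => ?_
  rw [MvPolynomial.monomial_mul, one_mul, add_tsub_cancel_of_le]
  rw [Finsupp.single_le_iff]
  have := hdiv ν hν; omega

lemma degOf_single (u : Fin n) : degOf (Finsupp.single u 1) = 1 := by
  simp [degOf, Finsupp.sum_single_index]

lemma homComp_X_mul (u : Fin n) (r : ℕ) (f : MvPolynomial (Fin n) k) :
    homogeneousComponent (r + 1) (monomial (Finsupp.single u 1) (1:k) * f) =
      monomial (Finsupp.single u 1) (1:k) * homogeneousComponent r f := by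
  ext ν
  simp only [homComp_support, MvPolynomial.coeff_monomial_mul']
  by_cases hle : Finsupp.single u 1 ≤ ν
  · have hdeg : degOf ν = degOf (ν - Finsupp.single u 1) + 1 := by
      conv_lhs => rw [← tsub_add_cancel_of_le hle]
      rw [degOf_add, degOf_single]
    by_cases h : degOf ν = r + 1
    · simp [hle, h, show degOf (ν - Finsupp.single u 1) = r by omega]
    · simp [hle, h, show ¬ degOf (ν - Finsupp.single u 1) = r by omega]
  · simp [hle]

end Stage5
-- Stage 6: Bayer–Stillman lemmas for revlex
section Stage6
open scoped Classical
variable {k : Type*} [Field k] {n : ℕ}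

lemma isLM_monomial (ν : Fin n →₀ ℕ) : IsLM (monomial ν (1:k)) ν := by
  constructor
  · rw [MvPolynomial.mem_support_iff, MvPolynomial.coeff_monomial, if_pos rfl]; exact one_ne_zero
  · intro σ hσ
    rw [MvPolynomial.mem_support_iff, MvPolynomial.coeff_monomial] at hσ
    split_ifs at hσ with h
    · exact Or.inl h.symm
    · exact absurd hσ (by simp)

lemma mono_mem_initial_self {P : Ideal (MvPolynomial (Fin n) k)} {ν : Fin n →₀ ℕ}
    (h : monomial ν (1:k) ∈ P) : monomial ν (1:k) ∈ initialIdeal P :=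
  isLM_mem_initialIdeal h (fun hc => (one_ne_zero : (1:k) ≠ 0) (by
    have := MvPolynomial.coeff_monomial ν ν (1:k)
    rw [if_pos rfl] at this
    rw [hc] at this
    simpa using this.symm)) (isLM_monomial ν)

lemma isLM_inherit {f g : MvPolynomial (Fin n) k} {μ : Fin n →₀ ℕ} (hlm : IsLM f μ)
    (hsub : g.support ⊆ f.support) (hμ : μ ∈ g.support) : IsLM g μ :=
  ⟨hμ, fun ν hν => hlm.2 ν (hsub hν)⟩

lemma X_eq_monomial (u : Fin n) : (X u : MvPolynomial (Fin n) k) = monomial (Finsupp.single u 1) 1 :=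
  rfl

lemma span_X_eq_MIdeal (u : Fin n) :
    Ideal.span {(X u : MvPolynomial (Fin n) k)} = MIdeal k {Finsupp.single u 1} := by
  unfold MIdeal
  rw [Set.image_singleton, X_eq_monomial]

lemma HomogIdeal.spanX (u : Fin n) : HomogIdeal (Ideal.span {(X u : MvPolynomial (Fin n) k)}) := by
  rw [span_X_eq_MIdeal]; exact HomogIdeal.mIdeal _

lemma le_colonX (P : Ideal (MvPolynomial (Fin n) k)) (u : Fin n) :
    P ≤ P.colon (Ideal.span {(X u : MvPolynomial (Fin n) k)}) := fun p hp =>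
  Ideal.mem_colon_span_singleton.mpr (P.mul_mem_right _ hp)

lemma HomogIdeal.colonX {P : Ideal (MvPolynomial (Fin n) k)} (hP : HomogIdeal P) (u : Fin n) :
    HomogIdeal (P.colon (Ideal.span {(X u : MvPolynomial (Fin n) k)})) := by
  intro f hf r
  rw [Ideal.mem_colon_span_singleton] at hf ⊢
  have h1 : homogeneousComponent (r+1) (f * X u) ∈ P := hP _ hf _
  rw [mul_comm, X_eq_monomial, homComp_X_mul] at h1
  rwa [mul_comm] at h1

/-- Bayer–Stillman I : `In(J + (x_u)) = In(J) + (x_u)` when `J` contains the later variables. -/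
lemma initial_sup_X (u : Fin n) {J : Ideal (MvPolynomial (Fin n) k)} (hJ : HomogIdeal J)
    (hvars : ∀ w : Fin n, u < w → X w ∈ J) :
    initialIdeal (J ⊔ Ideal.span {(X u : MvPolynomial (Fin n) k)}) = initialIdeal J ⊔ Ideal.span {X u} := by
  apply le_antisymm
  · rw [initialIdeal_eq_MIdeal]
    unfold MIdeal
    rw [Ideal.span_le]
    rintro g ⟨μ, hμ, rfl⟩
    beta_reduce
    have hhom : HomogIdeal (J ⊔ Ideal.span {(X u : MvPolynomial (Fin n) k)}) := hJ.sup (HomogIdeal.spanX u)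
    obtain ⟨f, hf, hf0, hfhom, hflm⟩ := LMset_homog_rep hhom hμ
    set r := degOf μ with hr
    by_cases hbig : hasBig u μ
    · -- leading monomial contains a variable above u : it is in J itself
      obtain ⟨w, hw, hw0⟩ := hbig
      have : monomial μ (1:k) = monomial (μ - Finsupp.single w 1) 1 * X w := by
        rw [X_eq_monomial, MvPolynomial.monomial_mul, mul_one, tsub_add_cancel_of_le]
        rw [Finsupp.single_le_iff]; omega
      refine SetLike.mem_coe.mpr (Ideal.mem_sup_left (mono_mem_initial_self ?_))
      rw [this]
      exact Ideal.mul_mem_left _ _ (hvars w hw)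
    · by_cases hμu : μ u ≠ 0
      · -- leading monomial divisible by x_u
        have : monomial μ (1:k) = monomial (μ - Finsupp.single u 1) 1 * X u := by
          rw [X_eq_monomial, MvPolynomial.monomial_mul, mul_one, tsub_add_cancel_of_le]
          rw [Finsupp.single_le_iff]; omega
        refine SetLike.mem_coe.mpr (Ideal.mem_sup_right ?_)
        rw [this]
        exact Ideal.mul_mem_left _ _ (Ideal.subset_span rfl)
      · -- main case
        push_neg at hμu
        have hμbig : ∀ w : Fin n, u < w → μ w = 0 := by
          intro w hw; by_contra hc; exact hbig ⟨w, hw, hc⟩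
        obtain ⟨g, hg, e, he, hfe⟩ := Submodule.mem_sup.mp hf
        obtain ⟨h, hh⟩ := (Ideal.mem_span_singleton').mp he
        -- homogeneous part of g
        set gr : MvPolynomial (Fin n) k := homogeneousComponent r g with hgr
        have hgrJ : gr ∈ J := hJ g hg r
        set e' : MvPolynomial (Fin n) k := f - gr with he'
        have he'c : e' = homogeneousComponent r e := by
          have hf2 : gr + homogeneousComponent r e = f := by
            rw [hgr, ← map_add, hfe, homComp_of_isHom hfhom]
          rw [he', ← hf2]; ring
        have hXdiv : ∀ ν ∈ e'.support, ν u ≠ 0 := by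
          intro ν hν
          rw [he'c] at hν
          have h1 : MvPolynomial.coeff ν e ≠ 0 := by
            have := MvPolynomial.mem_support_iff.mp hν
            rw [homComp_support] at this
            split_ifs at this with hd
            · exact this
            · simp at this
          have h2 : ν ∈ (monomial (Finsupp.single u 1) (1:k) * h).support := by
            rw [show monomial (Finsupp.single u 1) (1:k) * h = e by
              rw [← hh, X_eq_monomial]; ring]
            exact MvPolynomial.mem_support_iff.mpr h1
          rw [support_monomial_mul] at h2
          obtain ⟨σ, hσ, rfl⟩ := h2
          simp [Finsupp.add_apply, Finsupp.single_apply]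
        set g₂ : MvPolynomial (Fin n) k := restrictPart (hasBig u) gr with hg₂
        have hg₂J : g₂ ∈ J := restrictBig_mem hvars gr
        set grr : MvPolynomial (Fin n) k := gr - g₂ with hgrr
        have hgrrJ : grr ∈ J := J.sub_mem hgrJ hg₂J
        have hcoeff_grr : ∀ ν : Fin n →₀ ℕ, MvPolynomial.coeff ν grr =
            if hasBig u ν then 0 else MvPolynomial.coeff ν gr := by
          intro ν
          rw [hgrr, MvPolynomial.coeff_sub, hg₂, coeff_restrictPart]
          split_ifs <;> ring
        have hcoeff_gr : ∀ ν : Fin n →₀ ℕ, ν u = 0 →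
            MvPolynomial.coeff ν gr = MvPolynomial.coeff ν f := by
          intro ν hν
          have h1 : MvPolynomial.coeff ν e' = 0 := by
            by_contra hc
            exact hXdiv ν (MvPolynomial.mem_support_iff.mpr hc) hν
          rw [he', MvPolynomial.coeff_sub] at h1
          exact (sub_eq_zero.mp h1).symm
        have hμgrr : μ ∈ grr.support := by
          rw [MvPolynomial.mem_support_iff, hcoeff_grr, if_neg hbig, hcoeff_gr μ hμu]
          exact MvPolynomial.mem_support_iff.mp hflm.1
        have hgrr0 : grr ≠ 0 := fun hc => by rw [hc] at hμgrr; simp at hμgrr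
        have hlm_grr : IsLM grr μ := by
          refine ⟨hμgrr, fun ν hν => ?_⟩
          have hνbig : ¬ hasBig u ν := by
            intro hc
            have := MvPolynomial.mem_support_iff.mp hν
            rw [hcoeff_grr, if_pos hc] at this
            exact this rfl
          have hνgr : ν ∈ gr.support := by
            have := MvPolynomial.mem_support_iff.mp hν
            rw [hcoeff_grr, if_neg hνbig] at this
            exact MvPolynomial.mem_support_iff.mpr this
          have hgrhom : gr.IsHomogeneous r := by
            rw [hgr]; exact homogeneousComponent_isHomogeneous r g
          have hνdeg : degOf ν = r := isHom_iff.mp hgrhom ν hνgr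
          by_cases hνu : ν u = 0
          · have : ν ∈ f.support := by
              rw [MvPolynomial.mem_support_iff, ← hcoeff_gr ν hνu]
              exact MvPolynomial.mem_support_iff.mp hνgr
            exact hflm.2 ν this
          · refine Or.inr (rl_of_u ?_ hμbig (fun w hw => by
              by_contra hc
              exact hνbig ⟨w, hw, hc⟩) hμu hνu)
            rw [hνdeg]
        have : μ ∈ LMset J := ⟨grr, hgrrJ, hgrr0, hlm_grr⟩
        exact SetLike.mem_coe.mpr (Ideal.mem_sup_left (monomial_mem_initialIdeal.mpr ⟨μ, this, le_refl μ⟩))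
  · refine sup_le (initialIdeal_mono le_sup_left) ?_
    rw [Ideal.span_le]
    rintro g rfl
    refine SetLike.mem_coe.mpr ?_
    rw [X_eq_monomial]
    exact mono_mem_initial_self (Ideal.mem_sup_right (Ideal.subset_span rfl))

end Stage6
-- Stage 7: Bayer–Stillman II : In(P : x_u) = In(P) : x_u at monomial level
section Stage7
open scoped Classical
variable {k : Type*} [Field k] {n : ℕ}

lemma initial_colon (u : Fin n) {P : Ideal (MvPolynomial (Fin n) k)} (hP : HomogIdeal P)
    (hvars : ∀ w : Fin n, u < w → X w ∈ P) (ν : Fin n →₀ ℕ) :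
    monomial ν (1:k) ∈ initialIdeal (P.colon (Ideal.span {(X u : MvPolynomial (Fin n) k)})) ↔
      monomial (ν + Finsupp.single u 1) (1:k) ∈ initialIdeal P := by
  constructor
  · rintro hm
    obtain ⟨μ', ⟨f, hf, hf0, hflm⟩, hle⟩ := monomial_mem_initialIdeal.mp hm
    have hXf : monomial (Finsupp.single u 1) (1:k) * f ∈ P := by
      have := Ideal.mem_colon_span_singleton.mp hf
      rwa [mul_comm, X_eq_monomial] at this
    have hXf0 : monomial (Finsupp.single u 1) (1:k) * f ≠ 0 := by
      apply mul_ne_zero _ hf0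
      rw [← X_eq_monomial]
      exact MvPolynomial.X_ne_zero u
    have hlm2 : IsLM (monomial (Finsupp.single u 1) (1:k) * f) (Finsupp.single u 1 + μ') :=
      isLM_monomial_mul hflm _
    refine monomial_mem_initialIdeal.mpr ⟨Finsupp.single u 1 + μ', ⟨_, hXf, hXf0, hlm2⟩, ?_⟩
    rw [add_comm ν]
    exact add_le_add le_rfl hle
  · rintro hm
    obtain ⟨μ, hμ, hle⟩ := monomial_mem_initialIdeal.mp hm
    obtain ⟨f, hf, hf0, hfhom, hflm⟩ := LMset_homog_rep hP hμ
    by_cases hbig : hasBig u μ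
    · -- μ has a variable above u; then x_w divides ν and monomial ν ∈ P ⊆ colon
      obtain ⟨w, hw, hw0⟩ := hbig
      have hwu : w ≠ u := ne_of_gt hw
      have hνw : ν w ≠ 0 := by
        have := hle w
        rw [Finsupp.add_apply, Finsupp.single_apply, if_neg (Ne.symm hwu)] at this
        omega
      have hmem : monomial ν (1:k) ∈ P := by
        rw [show monomial ν (1:k) = monomial (ν - Finsupp.single w 1) 1 * X w by
          rw [X_eq_monomial, MvPolynomial.monomial_mul, mul_one, tsub_add_cancel_of_le]
          rw [Finsupp.single_le_iff]; omega]
        exact Ideal.mul_mem_left _ _ (hvars w hw)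
      exact mono_mem_initial_self (le_colonX P u hmem)
    · by_cases hμu : μ u = 0
      · -- μ ≤ ν directly
        have hμν : μ ≤ ν := by
          intro w
          have := hle w
          rw [Finsupp.add_apply, Finsupp.single_apply] at this
          by_cases hwu : w = u
          · subst hwu; omega
          · rw [if_neg (fun hc => hwu hc.symm)] at this; omega
        exact initialIdeal_mono (le_colonX P u)
          (monomial_mem_initialIdeal.mpr ⟨μ, hμ, hμν⟩)
      · -- main case : strip x_u from f
        have hμbig : ∀ w : Fin n, u < w → μ w = 0 := by
          intro w hw; by_contra hc; exact hbig ⟨w, hw, hc⟩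
        set f₂ : MvPolynomial (Fin n) k := restrictPart (hasBig u) f with hf₂
        set fr : MvPolynomial (Fin n) k := f - f₂ with hfr
        have hfrP : fr ∈ P := P.sub_mem hf (restrictBig_mem hvars f)
        have hcoeff_fr : ∀ σ : Fin n →₀ ℕ, MvPolynomial.coeff σ fr =
            if hasBig u σ then 0 else MvPolynomial.coeff σ f := by
          intro σ
          rw [hfr, MvPolynomial.coeff_sub, hf₂, coeff_restrictPart]
          split_ifs <;> ring
        have hμfr : μ ∈ fr.support := by
          rw [MvPolynomial.mem_support_iff, hcoeff_fr, if_neg hbig]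
          exact MvPolynomial.mem_support_iff.mp hflm.1
        have hfr0 : fr ≠ 0 := fun hc => by rw [hc] at hμfr; simp at hμfr
        have hfr_supp : ∀ σ ∈ fr.support, σ ∈ f.support ∧ ¬ hasBig u σ := by
          intro σ hσ
          have := MvPolynomial.mem_support_iff.mp hσ
          rw [hcoeff_fr] at this
          split_ifs at this with h
          · exact absurd rfl this
          · exact ⟨MvPolynomial.mem_support_iff.mpr this, h⟩
        have hlm_fr : IsLM fr μ :=
          isLM_inherit hflm (fun σ hσ => (hfr_supp σ hσ).1) hμfr
        have hdiv : ∀ σ ∈ fr.support, σ u ≠ 0 := by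
          intro σ hσ
          obtain ⟨hσf, hσbig⟩ := hfr_supp σ hσ
          exact divis_of_isLM hfhom hflm hμbig hμu hσf
            (fun w hw => by by_contra hc; exact hσbig ⟨w, hw, hc⟩)
        obtain ⟨h₃, hh₃⟩ := exists_div_X hdiv
        have hh₃0 : h₃ ≠ 0 := fun hc => hfr0 (by rw [hh₃, hc, mul_zero])
        have hh₃colon : h₃ ∈ P.colon (Ideal.span {(X u : MvPolynomial (Fin n) k)}) := by
          rw [Ideal.mem_colon_span_singleton, mul_comm, X_eq_monomial, ← hh₃]
          exact hfrP
        obtain ⟨lam, hlam⟩ := exists_isLM hh₃0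
        have hlam2 : IsLM fr (Finsupp.single u 1 + lam) := by
          rw [hh₃]; exact isLM_monomial_mul hlam _
        have heq : Finsupp.single u 1 + lam = μ := isLM_unique hlam2 hlm_fr
        have hlamν : lam ≤ ν := by
          intro w
          have h1 : Finsupp.single u 1 w + lam w = μ w := by
            rw [← heq, Finsupp.add_apply]
          have h2 : μ w ≤ ν w + Finsupp.single u 1 w := by
            have := hle w
            rwa [Finsupp.add_apply] at this
          omega
        exact monomial_mem_initialIdeal.mpr ⟨lam, ⟨h₃, hh₃colon, hh₃0, hlam⟩, hlamν⟩

end Stage7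
-- Stage 8a: maximal ideal, powers, homogeneous generation
section Stage8a
open scoped Classical
variable {k : Type*} [Field k] {n : ℕ}

lemma mem_maxIdl {f : MvPolynomial (Fin n) k} :
    f ∈ maxIdl k n ↔ constantCoeff f = 0 := by
  constructor
  · intro hf
    have : maxIdl k n ≤ RingHom.ker (constantCoeff (σ := Fin n) (R := k)) := by
      rw [maxIdl, Ideal.span_le]
      rintro g ⟨j, rfl⟩
      rw [SetLike.mem_coe, RingHom.mem_ker]
      exact constantCoeff_X k j
    exact this hf
  · intro hf
    rw [show f = ∑ ν ∈ f.support, monomial ν (MvPolynomial.coeff ν f) from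
      (MvPolynomial.support_sum_monomial_coeff f).symm]
    refine Ideal.sum_mem _ fun ν hν => ?_
    have hν0 : ν ≠ 0 := by
      intro hc
      subst hc
      rw [MvPolynomial.mem_support_iff] at hν
      exact hν (by rw [MvPolynomial.constantCoeff_eq] at hf; exact hf)
    obtain ⟨j, hj⟩ : ∃ j, ν j ≠ 0 := by
      by_contra hc
      push_neg at hc
      exact hν0 (Finsupp.ext hc)
    rw [show monomial ν (MvPolynomial.coeff ν f) =
        monomial (ν - Finsupp.single j 1) (MvPolynomial.coeff ν f) * X j by
      rw [X_eq_monomial, MvPolynomial.monomial_mul, mul_one, tsub_add_cancel_of_le]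
      rw [Finsupp.single_le_iff]; omega]
    exact Ideal.mul_mem_left _ _ (Ideal.subset_span ⟨j, rfl⟩)

lemma X_mem_maxIdl (j : Fin n) : (X j : MvPolynomial (Fin n) k) ∈ maxIdl k n :=
  Ideal.subset_span ⟨j, rfl⟩

lemma monomial_mem_maxIdl_pow {N : ℕ} :
    ∀ (ν : Fin n →₀ ℕ) (c : k), N ≤ degOf ν → monomial ν c ∈ (maxIdl k n) ^ N := by
  induction N with
  | zero => intro ν c _; rw [pow_zero, Ideal.one_eq_top]; exact Submodule.mem_top
  | succ N ih =>
    intro ν c hN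
    obtain ⟨j, hj⟩ : ∃ j, ν j ≠ 0 := by
      by_contra hc
      push_neg at hc
      have : degOf ν = 0 := by
        have : ν = 0 := Finsupp.ext hc
        rw [this]; simp [degOf]
      omega
    have hsub : degOf ν = degOf (ν - Finsupp.single j 1) + 1 := by
      conv_lhs => rw [← tsub_add_cancel_of_le (Finsupp.single_le_iff.mpr (by omega : 1 ≤ ν j))]
      rw [degOf_add, degOf_single]
    rw [show monomial ν c = monomial (ν - Finsupp.single j 1) c * X j by
      rw [X_eq_monomial, MvPolynomial.monomial_mul, mul_one, tsub_add_cancel_of_le]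
      rw [Finsupp.single_le_iff]; omega]
    rw [pow_succ]
    exact Ideal.mul_mem_mul (ih _ _ (by omega)) (X_mem_maxIdl j)

lemma isHom_mem_maxIdl_pow {f : MvPolynomial (Fin n) k} {r N : ℕ} (hf : f.IsHomogeneous r)
    (hN : N ≤ r) : f ∈ (maxIdl k n) ^ N := by
  rw [show f = ∑ ν ∈ f.support, monomial ν (MvPolynomial.coeff ν f) from
    (MvPolynomial.support_sum_monomial_coeff f).symm]
  refine Ideal.sum_mem _ fun ν hν => ?_
  exact monomial_mem_maxIdl_pow ν _ (by rw [isHom_iff.mp hf ν hν]; omega)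

/-- homogeneous component of a product with a homogeneous polynomial. -/
lemma homComp_mul_isHom {g : MvPolynomial (Fin n) k} {d : ℕ} (hg : g.IsHomogeneous d)
    (c : MvPolynomial (Fin n) k) {r : ℕ} (hd : d ≤ r) :
    homogeneousComponent r (c * g) = homogeneousComponent (r - d) c * g := by
  ext ν
  rw [homComp_support, MvPolynomial.coeff_mul, MvPolynomial.coeff_mul]
  by_cases h : degOf ν = r
  · rw [if_pos h]
    refine Finset.sum_congr rfl fun x hx => ?_
    rw [Finset.HasAntidiagonal.mem_antidiagonal] at hx
    by_cases hb : MvPolynomial.coeff x.2 g = 0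
    · rw [hb, mul_zero, mul_zero]
    · have hdb : degOf x.2 = d := isHom_iff.mp hg x.2 (MvPolynomial.mem_support_iff.mpr hb)
      have hda : degOf x.1 = r - d := by
        have : degOf x.1 + degOf x.2 = degOf ν := by rw [← degOf_add, hx]
        omega
      rw [homComp_support, if_pos hda]
  · rw [if_neg h]
    symm
    refine Finset.sum_eq_zero fun x hx => ?_
    rw [Finset.HasAntidiagonal.mem_antidiagonal] at hx
    by_cases hb : MvPolynomial.coeff x.2 g = 0
    · rw [hb, mul_zero]
    · have hdb : degOf x.2 = d := isHom_iff.mp hg x.2 (MvPolynomial.mem_support_iff.mpr hb)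
      rw [homComp_support, if_neg, zero_mul]
      intro hc
      have : degOf x.1 + degOf x.2 = degOf ν := by rw [← degOf_add, hx]
      omega

/-- a homogeneous ideal has a finite homogeneous generating set with a degree bound. -/
lemma exists_homog_gens (C : Ideal (MvPolynomial (Fin n) k)) (hC : HomogIdeal C) :
    ∃ (s : Finset (MvPolynomial (Fin n) k)) (D : ℕ),
      (∀ g ∈ s, g ∈ C ∧ ∃ d ≤ D, g.IsHomogeneous d) ∧ C = Ideal.span ↑s := by
  obtain ⟨s0, hs0⟩ := IsNoetherian.noetherian C
  refine ⟨s0.biUnion (fun g => (Finset.range (g.totalDegree + 1)).image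
      (fun r => homogeneousComponent r g)), s0.sup (fun g => g.totalDegree), ?_, ?_⟩
  · intro g hg
    rw [Finset.mem_biUnion] at hg
    obtain ⟨g0, hg0, hg1⟩ := hg
    rw [Finset.mem_image] at hg1
    obtain ⟨r, hr, rfl⟩ := hg1
    rw [Finset.mem_range] at hr
    have hg0C : g0 ∈ C := by
      rw [← hs0]; exact Ideal.subset_span hg0
    refine ⟨hC g0 hg0C r, r, ?_, homogeneousComponent_isHomogeneous r g0⟩
    calc r ≤ g0.totalDegree := by omega
    _ ≤ s0.sup (fun g => g.totalDegree) := Finset.le_sup hg0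
  · apply le_antisymm
    · conv_lhs => rw [← hs0]
      rw [show (Submodule.span (MvPolynomial (Fin n) k) (↑s0 : Set (MvPolynomial (Fin n) k)))
        = Ideal.span ↑s0 from rfl, Ideal.span_le]
      intro g hg
      rw [show g = ∑ r ∈ Finset.range (g.totalDegree + 1), homogeneousComponent r g from
        (MvPolynomial.sum_homogeneousComponent g).symm]
      refine Ideal.sum_mem _ fun r hr => ?_
      refine Ideal.subset_span ?_
      rw [Finset.coe_biUnion]
      exact Set.mem_biUnion hg (by
        rw [Finset.coe_image]
        exact Set.mem_image_of_mem _ (by rwa [Finset.mem_coe]))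
    · rw [Ideal.span_le]
      intro g hg
      rw [Finset.mem_coe, Finset.mem_biUnion] at hg
      obtain ⟨g0, hg0, hg1⟩ := hg
      rw [Finset.mem_image] at hg1
      obtain ⟨r, _, rfl⟩ := hg1
      exact hC g0 (by rw [← hs0]; exact Ideal.subset_span hg0) r

/-- annihilator of the class of `y` in `S ⧸ T`. -/
lemma ann_span_mk (T : Ideal (MvPolynomial (Fin n) k)) (y : MvPolynomial (Fin n) k) :
    (Submodule.span (MvPolynomial (Fin n) k)
      {(Ideal.Quotient.mk T y : MvPolynomial (Fin n) k ⧸ T)}).annihilator =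
    T.colon (Ideal.span {y}) := by
  ext r
  rw [Submodule.mem_annihilator_span_singleton, Ideal.mem_colon_span_singleton]
  have h1 : r • (Ideal.Quotient.mk T y) = Ideal.Quotient.mk T (r * y) := by
    have := Submodule.Quotient.mk_smul T r y
    rw [smul_eq_mul] at this
    exact this.symm
  rw [h1, Ideal.Quotient.eq_zero_iff_mem, mul_comm]

lemma ann_span_mk' (T : Ideal (MvPolynomial (Fin n) k)) (y : MvPolynomial (Fin n) k) :
    (⊥ : Submodule (MvPolynomial (Fin n) k) (MvPolynomial (Fin n) k ⧸ T)).colon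
      {Ideal.Quotient.mk T y} = T.colon (Ideal.span {y}) := by
  rw [← ann_span_mk]
  ext r
  rw [Submodule.mem_colon_singleton, Submodule.mem_bot, Submodule.mem_annihilator_span_singleton]

end Stage8a
-- Stage 8b: filter-regularity at one step ⟺ eventual colon stabilization
section Stage8b
open scoped Classical
variable {k : Type*} [Field k] {n : ℕ}

/-- `(P : x_u)_r = P_r` for all `r ≥ some r0`. -/
def StabCol (P : Ideal (MvPolynomial (Fin n) k)) (u : Fin n) : Prop :=
  ∃ r0 : ℕ, ∀ r : ℕ, r0 ≤ r → ∀ f : MvPolynomial (Fin n) k, f.IsHomogeneous r →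
    f ∈ P.colon (Ideal.span {(X u : MvPolynomial (Fin n) k)}) → f ∈ P

lemma stabCol_of_filterReg {P : Ideal (MvPolynomial (Fin n) k)} (hP : HomogIdeal P) (u : Fin n)
    (hreg : ∀ p : Ideal (MvPolynomial (Fin n) k),
      IsAssociatedPrime p (MvPolynomial (Fin n) k ⧸ P) → p ≠ maxIdl k n → X u ∉ p) :
    StabCol P u := by
  set S := MvPolynomial (Fin n) k
  set Cid : Ideal S := P.colon (Ideal.span {(X u : MvPolynomial (Fin n) k)}) with hCid
  -- the colon chain (P : 𝔪^N)
  have hmono : Monotone (fun N : ℕ => Submodule.colon P ((maxIdl k n) ^ N : Ideal S)) := by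
    intro N M hNM
    intro r hr
    rw [Submodule.mem_colon] at hr ⊢
    exact fun m hm => hr m (Ideal.pow_le_pow_right hNM hm)
  obtain ⟨N0, hN0⟩ := monotone_stabilizes_iff_noetherian.mpr inferInstance
    ⟨fun N : ℕ => Submodule.colon P ((maxIdl k n) ^ N : Ideal S), hmono⟩
  set T : Ideal S := Submodule.colon P ((maxIdl k n) ^ N0 : Ideal S) with hT
  have hPT : P ≤ T := by
    intro p hp
    rw [hT, Submodule.mem_colon]
    exact fun m _ => P.mul_mem_right m hp
  -- the colon ideal is contained in T
  have hCT : Cid ≤ T := by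
    intro y hy
    by_contra hyT
    have hx : (Ideal.Quotient.mk T y : S ⧸ T) ≠ 0 := fun hc =>
      hyT (Ideal.Quotient.eq_zero_iff_mem.mp hc)
    obtain ⟨q, hq, hle⟩ := exists_le_isAssociatedPrime_of_isNoetherianRing S _ hx
    obtain ⟨hqprime, y', hy'⟩ := isAssociatedPrime_iff.mp hq
    obtain ⟨y'', rfl⟩ := Ideal.Quotient.mk_surjective y'
    have hq_eq : q = T.colon (Ideal.span {y''}) := by rw [hy', ann_span_mk']
    rw [ann_span_mk'] at hle
    have hXuq : X u ∈ q := by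
      apply hle
      rw [Ideal.mem_colon_span_singleton, mul_comm]
      exact hPT (Ideal.mem_colon_span_singleton.mp hy)
    have hy''T : y'' ∉ T := by
      intro hc
      have h1 : (1 : S) ∈ q := by
        rw [hq_eq, Ideal.mem_colon_span_singleton, one_mul]; exact hc
      exact hqprime.ne_top ((Ideal.eq_top_iff_one _).mpr h1)
    have hmq : ¬ maxIdl k n ≤ q := by
      intro hmle
      apply hy''T
      have hstep : y'' ∈ Submodule.colon P ((maxIdl k n) ^ (N0 + 1) : Ideal S) := by
        rw [Submodule.mem_colon]
        intro m hm
        rw [pow_succ] at hm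
        refine Submodule.mul_induction_on hm ?_ ?_
        · intro a ha b hb
          have hby : b * y'' ∈ T := by
            have : b ∈ q := hmle hb
            rw [hq_eq] at this
            exact Ideal.mem_colon_span_singleton.mp this
          have := Submodule.mem_colon.mp hby a ha
          rw [smul_eq_mul] at this ⊢
          have heq : y'' * (a * b) = b * y'' * a := by ring
          rw [heq]
          exact this
        · intro x1 x2 h1 h2
          rw [smul_add]
          exact P.add_mem h1 h2
      have hstab := hN0 (N0 + 1) (by omega)
      simp only [OrderHom.coe_mk] at hstab
      rw [← hstab] at hstep
      exact hstep
    obtain ⟨v, hv, hvq⟩ : ∃ v ∈ (maxIdl k n) ^ N0, v ∉ q := by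
      by_contra hc
      push_neg at hc
      exact hmq (hqprime.le_of_pow_le hc)
    have hq_eq2 : q = P.colon (Ideal.span {v * y''}) := by
      apply le_antisymm
      · intro s hs
        rw [Ideal.mem_colon_span_singleton]
        rw [hq_eq] at hs
        have h1 : s * y'' ∈ T := Ideal.mem_colon_span_singleton.mp hs
        have h2 := Submodule.mem_colon.mp h1 v hv
        rw [smul_eq_mul] at h2
        have heq : s * (v * y'') = s * y'' * v := by ring
        rw [heq]
        exact h2
      · intro s hs
        rw [Ideal.mem_colon_span_singleton] at hs
        have h2 : (s * v) * y'' ∈ T := by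
          refine hPT ?_
          have heq : s * v * y'' = s * (v * y'') := by ring
          rw [heq]
          exact hs
        have h3 : s * v ∈ q := by
          rw [hq_eq, Ideal.mem_colon_span_singleton]
          exact h2
        rcases hqprime.mem_or_mem h3 with h | h
        · exact h
        · exact absurd h hvq
    have hassoc : IsAssociatedPrime q (S ⧸ P) :=
      isAssociatedPrime_iff.mpr ⟨hqprime, Ideal.Quotient.mk P (v * y''), by rw [ann_span_mk']; exact hq_eq2⟩
    have hqne : q ≠ maxIdl k n := fun hc => hmq (le_of_eq hc.symm)
    exact (hreg q hassoc hqne) hXuq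
  -- conclude with the degree bound
  have hChom : HomogIdeal Cid := hP.colonX u
  obtain ⟨s, D, hgens, hspan⟩ := exists_homog_gens Cid hChom
  refine ⟨D + N0, fun r hr f hfhom hfC => ?_⟩
  have hf2 : f ∈ Ideal.span (↑s : Set S) := by rw [← hspan]; exact hfC
  obtain ⟨c, -, hc⟩ := Submodule.mem_span_finset.mp hf2
  have hfc : f = homogeneousComponent r f := (homComp_of_isHom hfhom).symm
  rw [hfc, ← hc, map_sum]
  refine Ideal.sum_mem _ fun g hg => ?_
  obtain ⟨hgC, d, hd, hghom⟩ := hgens g hg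
  rw [smul_eq_mul, homComp_mul_isHom hghom _ (by omega)]
  have h1 : homogeneousComponent (r - d) (c g) ∈ (maxIdl k n) ^ N0 :=
    isHom_mem_maxIdl_pow (homogeneousComponent_isHomogeneous _ _) (by omega)
  have h2 : g ∈ T := hCT hgC
  have h3 := Submodule.mem_colon.mp h2 _ h1
  rwa [smul_eq_mul, mul_comm] at h3

lemma filterReg_of_stabCol {P : Ideal (MvPolynomial (Fin n) k)} (hP : HomogIdeal P) (u : Fin n)
    (hst : StabCol P u) :
    ∀ p : Ideal (MvPolynomial (Fin n) k),
      IsAssociatedPrime p (MvPolynomial (Fin n) k ⧸ P) → p ≠ maxIdl k n → X u ∉ p := by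
  obtain ⟨r0, hstab⟩ := hst
  rintro p hpa hpne hXu
  obtain ⟨hprime, x, hx⟩ := isAssociatedPrime_iff.mp hpa
  obtain ⟨y, rfl⟩ := Ideal.Quotient.mk_surjective x
  have hp_eq : p = P.colon (Ideal.span {y}) := by rw [hx, ann_span_mk']
  have hcomp : ∀ r : ℕ, homogeneousComponent r y ∈ P.colon (Ideal.span {(X u : MvPolynomial (Fin n) k)}) := by
    intro r
    rw [Ideal.mem_colon_span_singleton]
    have h1 : X u * y ∈ P := by
      rw [hp_eq] at hXu
      exact Ideal.mem_colon_span_singleton.mp hXu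
    have h2 := hP _ h1 (r + 1)
    rw [X_eq_monomial, homComp_X_mul] at h2
    rw [show homogeneousComponent r y * X u =
      monomial (Finsupp.single u 1) 1 * homogeneousComponent r y by
      rw [X_eq_monomial]; ring]
    exact h2
  set R1 := max (y.totalDegree + 1) r0 with hR1
  set y' := ∑ r ∈ Finset.range r0, homogeneousComponent r y with hy'
  have hyy' : y - y' ∈ P := by
    have hsum : ∑ r ∈ Finset.range R1, homogeneousComponent r y = y := by
      conv_rhs => rw [← MvPolynomial.sum_homogeneousComponent y]
      symm
      apply Finset.sum_subset (Finset.range_subset_range.mpr (le_max_left _ _))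
      intro x2 _ hx2
      rw [Finset.mem_range, not_lt] at hx2
      exact homogeneousComponent_eq_zero _ _ (by omega)
    rw [← hsum, hy', ← Finset.sum_sdiff_eq_sub (Finset.range_subset_range.mpr (le_max_right _ _))]
    refine Ideal.sum_mem _ fun r hr => ?_
    rw [Finset.mem_sdiff, Finset.mem_range, Finset.mem_range] at hr
    exact hstab r (by omega) _ (homogeneousComponent_isHomogeneous r y) (hcomp r)
  have hp_eq2 : p = P.colon (Ideal.span {y'}) := by
    rw [hp_eq]
    ext s
    rw [Ideal.mem_colon_span_singleton, Ideal.mem_colon_span_singleton]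
    constructor
    · intro h
      have heq : s * y' = s * y - s * (y - y') := by ring
      rw [heq]
      exact P.sub_mem h (P.mul_mem_left _ hyy')
    · intro h
      have heq : s * y = s * y' + s * (y - y') := by ring
      rw [heq]
      exact P.add_mem h (P.mul_mem_left _ hyy')
  have hmle : maxIdl k n ≤ p := by
    rw [maxIdl, Ideal.span_le]
    rintro g ⟨j, rfl⟩
    have hpow : (X j : MvPolynomial (Fin n) k) ^ r0 * y' ∈ P := by
      rw [hy', Finset.mul_sum]
      refine Ideal.sum_mem _ fun r hr => ?_
      rw [Finset.mem_range] at hr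
      refine hstab (r0 + r) (by omega) _ ?_ ?_
      · exact (MvPolynomial.isHomogeneous_X_pow j r0).mul
          (homogeneousComponent_isHomogeneous r y)
      · exact Ideal.mul_mem_left _ _ (hcomp r)
    have h4 : (X j : MvPolynomial (Fin n) k) ^ r0 ∈ p := by
      rw [hp_eq2, Ideal.mem_colon_span_singleton]
      exact hpow
    exact SetLike.mem_coe.mpr (hprime.mem_of_pow_mem r0 h4)
  have hnle : ¬ p ≤ maxIdl k n := fun hle => hpne (le_antisymm hle hmle)
  obtain ⟨w, hwp, hwm⟩ := SetLike.not_le_iff_exists.mp hnle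
  have hcw : constantCoeff w ≠ 0 := fun hc => hwm (mem_maxIdl.mpr hc)
  have h1 : w - MvPolynomial.C (constantCoeff w) ∈ p := by
    refine hmle (mem_maxIdl.mpr ?_)
    rw [map_sub]
    simp
  have h2 : MvPolynomial.C (constantCoeff w) ∈ p := by
    have heq : MvPolynomial.C (constantCoeff w) =
        w - (w - MvPolynomial.C (constantCoeff w)) := by ring
    rw [heq]
    exact p.sub_mem hwp h1
  have h3 : (1 : MvPolynomial (Fin n) k) ∈ p := by
    have h4 := p.mul_mem_left (MvPolynomial.C (constantCoeff w)⁻¹) h2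
    rwa [← map_mul, inv_mul_cancel₀ hcw, map_one] at h4
  exact hprime.ne_top ((Ideal.eq_top_iff_one _).mpr h3)

end Stage8b
-- Stage 9: Jlow and Jtil as monomial ideals
section Stage9
open scoped Classical
variable {k : Type*} [Field k] {n : ℕ}

lemma evalZero_monomial (i : ℕ) (μ : Fin n →₀ ℕ) :
    evalZero k n i (monomial μ (1:k)) =
      if ∀ w : Fin n, n - i ≤ (w:ℕ) → μ w = 0 then monomial μ 1 else 0 := by
  rw [evalZero, MvPolynomial.aeval_monomial, map_one, one_mul]
  split_ifs with h
  · conv_rhs => rw [MvPolynomial.monomial_eq, MvPolynomial.C_1, one_mul]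
    apply Finsupp.prod_congr
    intro j hj
    rw [if_pos]
    have := Finsupp.mem_support_iff.mp hj
    by_contra hc
    exact this (h j (by omega))
  · push_neg at h
    obtain ⟨w, hw, hw0⟩ := h
    apply Finset.prod_eq_zero (Finsupp.mem_support_iff.mpr hw0)
    show (if (w:ℕ) < n - i then (X w : MvPolynomial (Fin n) k) else 0) ^ μ w = 0
    rw [if_neg (by omega)]
    exact zero_pow hw0

lemma evalOne_monomial {i : ℕ} (hi : i < n) (μ : Fin n →₀ ℕ) :
    evalOne k n i (monomial μ (1:k)) =
      if ∀ w : Fin n, n - i ≤ (w:ℕ) → μ w = 0 then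
        monomial (Finsupp.erase ⟨n - i - 1, by omega⟩ μ) 1 else 0 := by
  set u : Fin n := ⟨n - i - 1, by omega⟩ with hu
  rw [evalOne, MvPolynomial.aeval_monomial, map_one, one_mul]
  split_ifs with h
  · conv_rhs => rw [MvPolynomial.monomial_eq, MvPolynomial.C_1, one_mul]
    rw [Finsupp.prod, Finsupp.prod]
    have h1 : ∀ j ∈ μ.support, j ≠ u →
        (if (j:ℕ) < n - i - 1 then (X j : MvPolynomial (Fin n) k)
          else if (j:ℕ) = n - i - 1 then 1 else 0) ^ μ j = X j ^ μ j := by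
      intro j hj hju
      have hlow : (j:ℕ) < n - i := by
        have := Finsupp.mem_support_iff.mp hj
        by_contra hc
        exact this (h j (by omega))
      have : (j:ℕ) ≠ n - i - 1 := fun hc => hju (Fin.ext (by rw [hc, hu]))
      rw [if_pos (by omega)]
    have h2 : (fun j : Fin n => (if (j:ℕ) < n - i - 1 then (X j : MvPolynomial (Fin n) k)
        else if (j:ℕ) = n - i - 1 then 1 else 0) ^ μ j) u = 1 := by
      show (if ((u:ℕ)) < n - i - 1 then (X u : MvPolynomial (Fin n) k)
        else if ((u:ℕ)) = n - i - 1 then 1 else 0) ^ μ u = 1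
      rw [if_neg (by simp [hu]), if_pos (by simp [hu]), one_pow]
    beta_reduce
    calc ∏ j ∈ μ.support, (if (j:ℕ) < n - i - 1 then (X j : MvPolynomial (Fin n) k)
          else if (j:ℕ) = n - i - 1 then 1 else 0) ^ μ j
        = ∏ j ∈ μ.support.erase u, (if (j:ℕ) < n - i - 1 then (X j : MvPolynomial (Fin n) k)
          else if (j:ℕ) = n - i - 1 then 1 else 0) ^ μ j :=
          (Finset.prod_erase (f := fun j : Fin n => (if (j:ℕ) < n - i - 1
            then (X j : MvPolynomial (Fin n) k)
            else if (j:ℕ) = n - i - 1 then 1 else 0) ^ μ j) (a := u) μ.support h2).symm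
      _ = ∏ j ∈ μ.support.erase u, (X j : MvPolynomial (Fin n) k) ^ μ j := by
          refine Finset.prod_congr rfl fun j hj => ?_
          exact h1 j (Finset.mem_of_mem_erase hj) (Finset.ne_of_mem_erase hj)
      _ = ∏ j ∈ (Finsupp.erase u μ).support, (X j : MvPolynomial (Fin n) k) ^ (Finsupp.erase u μ) j := by
          rw [Finsupp.support_erase]
          refine Finset.prod_congr rfl fun j hj => ?_
          rw [Finsupp.erase_ne (Finset.ne_of_mem_erase hj)]
  · push_neg at h
    obtain ⟨w, hw, hw0⟩ := h
    apply Finset.prod_eq_zero (Finsupp.mem_support_iff.mpr hw0)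
    show (if (w:ℕ) < n - i - 1 then (X w : MvPolynomial (Fin n) k)
      else if (w:ℕ) = n - i - 1 then 1 else 0) ^ μ w = 0
    rw [if_neg (by omega), if_neg (by omega)]
    exact zero_pow hw0

lemma Jlow_eq (i : ℕ) (I : Ideal (MvPolynomial (Fin n) k)) :
    Jlow i I = MIdeal k {μ | μ ∈ LMset I ∧ ∀ w : Fin n, n - i ≤ (w:ℕ) → μ w = 0} := by
  unfold Jlow initialIdeal
  rw [Ideal.map_span]
  unfold MIdeal
  apply le_antisymm <;> rw [Ideal.span_le]
  · rintro g ⟨g0, ⟨f, hf, hf0, μ, hμ, hmax, rfl⟩, rfl⟩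
    rw [SetLike.mem_coe]
    rw [evalZero_monomial]
    split_ifs with h
    · exact Ideal.subset_span ⟨μ, ⟨⟨f, hf, hf0, hμ, hmax⟩, h⟩, rfl⟩
    · exact Ideal.zero_mem _
  · rintro g ⟨μ, ⟨⟨f, hf, hf0, hμ, hmax⟩, hlow⟩, rfl⟩
    rw [SetLike.mem_coe]
    refine Ideal.subset_span ⟨monomial μ 1, ⟨f, hf, hf0, μ, hμ, hmax, rfl⟩, ?_⟩
    rw [evalZero_monomial, if_pos hlow]

lemma Jtil_eq {i : ℕ} (hi : i < n) (I : Ideal (MvPolynomial (Fin n) k)) :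
    Jtil i I = MIdeal k {b | ∃ μ ∈ LMset I, (∀ w : Fin n, n - i ≤ (w:ℕ) → μ w = 0) ∧
      b = Finsupp.erase ⟨n - i - 1, by omega⟩ μ} := by
  unfold Jtil initialIdeal
  rw [Ideal.map_span]
  unfold MIdeal
  apply le_antisymm <;> rw [Ideal.span_le]
  · rintro g ⟨g0, ⟨f, hf, hf0, μ, hμ, hmax, rfl⟩, rfl⟩
    rw [SetLike.mem_coe]
    rw [evalOne_monomial hi]
    split_ifs with h
    · exact Ideal.subset_span ⟨_, ⟨μ, ⟨f, hf, hf0, hμ, hmax⟩, h, rfl⟩, rfl⟩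
    · exact Ideal.zero_mem _
  · rintro g ⟨b, ⟨μ, ⟨f, hf, hf0, hμ, hmax⟩, hlow, rfl⟩, rfl⟩
    rw [SetLike.mem_coe]
    refine Ideal.subset_span ⟨monomial μ 1, ⟨f, hf, hf0, μ, hμ, hmax, rfl⟩, ?_⟩
    rw [evalOne_monomial hi, if_pos hlow]

end Stage9
-- Stage 10a: the partial ideals (I, x_n, ..., x_{n-i+1}) and their initial ideals
section Stage10a
open scoped Classical
variable {k : Type*} [Field k] {n : ℕ}

/-- exponents of the variables `x_{n-i+1}, …, x_n` (indices `≥ n - i`). -/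
def Bset (n i : ℕ) : Set (Fin n →₀ ℕ) :=
  {b | ∃ w : Fin n, n - i ≤ (w:ℕ) ∧ b = Finsupp.single w 1}

lemma MIdeal_union (A B : Set (Fin n →₀ ℕ)) :
    MIdeal k (A ∪ B) = MIdeal k A ⊔ MIdeal k B := by
  unfold MIdeal
  rw [Set.image_union, Ideal.span_union]

lemma Bset_zero : Bset n 0 = ∅ := by
  ext b
  simp only [Bset, Set.mem_setOf_eq, Set.mem_empty_iff_false, iff_false]
  rintro ⟨w, hw, -⟩
  have := w.isLt
  omega

lemma Bset_succ {i : ℕ} (hi : i < n) :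
    Bset n (i + 1) = Bset n i ∪ {Finsupp.single (⟨n - i - 1, by omega⟩ : Fin n) 1} := by
  ext b
  simp only [Bset, Set.mem_setOf_eq, Set.mem_union, Set.mem_singleton_iff]
  constructor
  · rintro ⟨w, hw, rfl⟩
    by_cases h : n - i ≤ (w:ℕ)
    · exact Or.inl ⟨w, h, rfl⟩
    · refine Or.inr ?_
      have : w = (⟨n - i - 1, by omega⟩ : Fin n) := Fin.ext (by simp; omega)
      rw [this]
  · rintro (⟨w, hw, rfl⟩ | rfl)
    · exact ⟨w, by omega, rfl⟩
    · exact ⟨⟨n - i - 1, by omega⟩, by simp; omega, rfl⟩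

lemma X_mem_of_Bset {I : Ideal (MvPolynomial (Fin n) k)} {i : ℕ} {w : Fin n}
    (hw : n - i ≤ (w:ℕ)) : (X w : MvPolynomial (Fin n) k) ∈ I ⊔ MIdeal k (Bset n i) := by
  refine Ideal.mem_sup_right ?_
  rw [X_eq_monomial]
  exact Ideal.subset_span ⟨Finsupp.single w 1, ⟨w, hw, rfl⟩, rfl⟩

lemma initial_Q {I : Ideal (MvPolynomial (Fin n) k)} (hI : HomogIdeal I) :
    ∀ i : ℕ, i ≤ n → initialIdeal (I ⊔ MIdeal k (Bset n i)) =
      initialIdeal I ⊔ MIdeal k (Bset n i) := by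
  intro i
  induction i with
  | zero =>
    intro _
    rw [Bset_zero]
    have : MIdeal k (∅ : Set (Fin n →₀ ℕ)) = ⊥ := by
      unfold MIdeal
      rw [Set.image_empty, Ideal.span_empty]
    rw [this, sup_bot_eq, sup_bot_eq]
  | succ i ih =>
    intro hi1
    have hi : i < n := by omega
    set u : Fin n := ⟨n - i - 1, by omega⟩ with hu
    rw [Bset_succ hi, MIdeal_union]
    have hsingle : MIdeal k {Finsupp.single u 1} = Ideal.span {(X u : MvPolynomial (Fin n) k)} :=
      (span_X_eq_MIdeal u).symm
    rw [hsingle, ← sup_assoc, ← sup_assoc]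
    have hJhom : HomogIdeal (I ⊔ MIdeal k (Bset n i)) := hI.sup (HomogIdeal.mIdeal _)
    have hvars : ∀ w : Fin n, u < w → X w ∈ I ⊔ MIdeal k (Bset n i) := by
      intro w hw
      refine X_mem_of_Bset ?_
      have : (u:ℕ) < (w:ℕ) := hw
      simp only [hu] at this
      omega
    rw [initial_sup_X u hJhom hvars, ih (by omega)]

lemma partIdeal_eq {t : ℕ} (ht : t < n) (I : Ideal (MvPolynomial (Fin n) k)) (i : ℕ)
    (hi : i ≤ t) :
    partIdeal I (fun j : Fin (t+1) =>
        (X ⟨n - 1 - (j : ℕ), by omega⟩ : MvPolynomial (Fin n) k)) i =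
      I ⊔ MIdeal k (Bset n i) := by
  unfold partIdeal MIdeal
  congr 1
  congr 1
  ext g
  constructor
  · rintro ⟨j, hj, rfl⟩
    simp only [Set.mem_setOf_eq] at hj
    refine ⟨Finsupp.single (⟨n - 1 - (j:ℕ), by omega⟩ : Fin n) 1, ⟨⟨n - 1 - (j:ℕ), by omega⟩,
      ?_, rfl⟩, ?_⟩
    · simp only []
      have := j.isLt
      omega
    · show ((fun μ => (monomial μ) (1:k)) (Finsupp.single (⟨n - 1 - (j:ℕ), by omega⟩ : Fin n) 1))
        = (X (⟨n - 1 - (j:ℕ), by omega⟩ : Fin n) : MvPolynomial (Fin n) k)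
      rw [X_eq_monomial]
  · rintro ⟨b, ⟨w, hw, rfl⟩, rfl⟩
    have hwlt := w.isLt
    have hi0 : 0 < i := by
      by_contra hc
      push_neg at hc
      omega
    refine ⟨⟨n - 1 - (w:ℕ), by omega⟩, ?_, ?_⟩
    · simp only [Set.mem_setOf_eq]
      omega
    · have : (⟨n - 1 - (n - 1 - (w:ℕ)), by omega⟩ : Fin n) = w := Fin.ext (by simp; omega)
      simp only [this]
      rw [X_eq_monomial]

lemma MQ_iff {I : Ideal (MvPolynomial (Fin n) k)} (i : ℕ) (ν : Fin n →₀ ℕ) :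
    monomial ν (1:k) ∈ initialIdeal I ⊔ MIdeal k (Bset n i) ↔
      ((∃ μ ∈ LMset I, μ ≤ ν) ∨ ∃ w : Fin n, n - i ≤ (w:ℕ) ∧ ν w ≠ 0) := by
  rw [initialIdeal_eq_MIdeal, ← MIdeal_union, monomial_mem_MIdeal]
  constructor
  · rintro ⟨μ, (hμ | ⟨w, hw, rfl⟩), hle⟩
    · exact Or.inl ⟨μ, hμ, hle⟩
    · refine Or.inr ⟨w, hw, ?_⟩
      have := hle w
      rw [Finsupp.single_apply, if_pos rfl] at this
      omega
  · rintro (⟨μ, hμ, hle⟩ | ⟨w, hw, hw0⟩)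
    · exact ⟨μ, Or.inl hμ, hle⟩
    · exact ⟨Finsupp.single w 1, Or.inr ⟨w, hw, rfl⟩, Finsupp.single_le_iff.mpr (by omega)⟩

end Stage10a
-- Stage 10b: witnesses and the final assembly
section Stage10b
open scoped Classical
variable {k : Type*} [Field k] {n : ℕ}

lemma nat_flip {g : ℕ → Prop} (h0 : ¬ g 0) {m : ℕ} (hm : g m) : ∃ c, ¬ g c ∧ g (c+1) := by
  induction m with
  | zero => exact absurd hm h0
  | succ m ih =>
    by_cases h : g m
    · exact ih h
    · exact ⟨m, h, hm⟩

lemma degOf_single_c (u : Fin n) (c : ℕ) : degOf (Finsupp.single u c) = c := by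
  unfold degOf
  exact Finsupp.sum_single_index rfl

/-- the monomial-membership predicate for `In(I) + (x_{n-i+1},…,x_n)`. -/
def MQp {n : ℕ} {k : Type*} [Field k] (I : Ideal (MvPolynomial (Fin n) k)) (i : ℕ)
    (ν : Fin n →₀ ℕ) : Prop :=
  (∃ μ ∈ LMset I, μ ≤ ν) ∨ ∃ w : Fin n, n - i ≤ (w:ℕ) ∧ ν w ≠ 0

/-- colon witness in degree `r`. -/
def cwWit (I : Ideal (MvPolynomial (Fin n) k)) (i r : ℕ) (u : Fin n) : Prop :=
  ∃ σ : Fin n →₀ ℕ, degOf σ = r ∧ MQp I i (σ + Finsupp.single u 1) ∧ ¬ MQp I i σ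

/-- saturation witness in degree `r`. -/
def mwWit (I : Ideal (MvPolynomial (Fin n) k)) (i r : ℕ) (u : Fin n) : Prop :=
  ∃ σ : Fin n →₀ ℕ, degOf σ = r ∧ (∀ w : Fin n, n - i ≤ (w:ℕ) → σ w = 0) ∧
    (∃ μ ∈ LMset I, (∀ w : Fin n, n - i ≤ (w:ℕ) → μ w = 0) ∧ Finsupp.erase u μ ≤ σ) ∧
    ¬ ∃ μ ∈ LMset I, (∀ w : Fin n, n - i ≤ (w:ℕ) → μ w = 0) ∧ μ ≤ σ

lemma cw_to_mw {I : Ideal (MvPolynomial (Fin n) k)} {i r : ℕ} (hin : i < n)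
    (h : cwWit I i r (⟨n - i - 1, by omega⟩ : Fin n)) :
    mwWit I i r (⟨n - i - 1, by omega⟩ : Fin n) := by
  set u : Fin n := ⟨n - i - 1, by omega⟩ with hu
  obtain ⟨σ, hd, h1, h2⟩ := h
  have h2a : ¬ ∃ μ ∈ LMset I, μ ≤ σ := fun hx => h2 (Or.inl hx)
  have hlow : ∀ w : Fin n, n - i ≤ (w:ℕ) → σ w = 0 := by
    intro w hw
    by_contra hc
    exact h2 (Or.inr ⟨w, hw, hc⟩)
  rcases h1 with ⟨μ, hLM, hle⟩ | ⟨w, hw, hw0⟩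
  · have hwu : ∀ w : Fin n, n - i ≤ (w:ℕ) → (w:ℕ) ≠ (u:ℕ) := by
      intro w hw
      simp only [hu]
      omega
    have hμlow : ∀ w : Fin n, n - i ≤ (w:ℕ) → μ w = 0 := by
      intro w hw
      have := hle w
      rw [Finsupp.add_apply, Finsupp.single_apply,
        if_neg (fun hc : u = w => hwu w hw (by rw [hc]))] at this
      have := hlow w hw
      omega
    refine ⟨σ, hd, hlow, ⟨μ, hLM, hμlow, ?_⟩, fun ⟨μ', hLM', _, hle'⟩ => h2a ⟨μ', hLM', hle'⟩⟩
    intro w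
    by_cases hwu2 : w = u
    · subst hwu2
      rw [Finsupp.erase_same]
      exact Nat.zero_le _
    · rw [Finsupp.erase_ne hwu2]
      have := hle w
      rw [Finsupp.add_apply, Finsupp.single_apply, if_neg (fun hc : u = w => hwu2 hc.symm)] at this
      omega
  · exfalso
    have hσw := hlow w hw
    have hsw : Finsupp.single u 1 w = 0 := by
      rw [Finsupp.single_apply, if_neg]
      intro hc
      have : (u:ℕ) = (w:ℕ) := by rw [hc]
      simp only [hu] at this
      omega
    rw [Finsupp.add_apply, hσw, hsw] at hw0
    exact hw0 rfl

lemma mw_to_cw {I : Ideal (MvPolynomial (Fin n) k)} {i r : ℕ} (hin : i < n)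
    (h : mwWit I i r (⟨n - i - 1, by omega⟩ : Fin n)) :
    ∃ c : ℕ, cwWit I i (r + c) (⟨n - i - 1, by omega⟩ : Fin n) := by
  set u : Fin n := ⟨n - i - 1, by omega⟩ with hu
  obtain ⟨σ, hd, hlow, ⟨μ, hLM, hμlow, herase⟩, hnot⟩ := h
  have hnq : ¬ MQp I i σ := by
    rintro (⟨μ', h1, h2⟩ | ⟨w, hw, hw0⟩)
    · refine hnot ⟨μ', h1, ?_, h2⟩
      intro w hw
      have := h2 w
      have := hlow w hw
      omega
    · exact hw0 (hlow w hw)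
  have hq : MQp I i (σ + Finsupp.single u (μ u)) := by
    refine Or.inl ⟨μ, hLM, fun w => ?_⟩
    rw [Finsupp.add_apply, Finsupp.single_apply]
    by_cases hwu : u = w
    · subst hwu
      rw [if_pos rfl]
      omega
    · rw [if_neg hwu]
      have := herase w
      rw [Finsupp.erase_ne (fun hc => hwu hc.symm)] at this
      omega
  obtain ⟨c, hc1, hc2⟩ := nat_flip (g := fun c => MQp I i (σ + Finsupp.single u c))
    (by intro hc; apply hnq; simpa using hc) hq
  refine ⟨c, σ + Finsupp.single u c, by rw [degOf_add, degOf_single_c]; omega, ?_, hc1⟩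
  rw [add_assoc, ← Finsupp.single_add]
  exact hc2

lemma mw_iff_fw {I : Ideal (MvPolynomial (Fin n) k)} {i r : ℕ} (hin : i < n) :
    mwWit I i r (⟨n - i - 1, by omega⟩ : Fin n) ↔
    (∃ f : MvPolynomial (Fin n) k, f ∈ Jtil i I ∧
      f ∈ supported k {j : Fin n | (j : ℕ) < n - i} ∧ f.IsHomogeneous r ∧ f ∉ Jlow i I) := by
  set u : Fin n := ⟨n - i - 1, by omega⟩ with hu
  constructor
  · rintro ⟨σ, hd, hlow, ⟨μ, hLM, hμlow, herase⟩, hnot⟩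
    refine ⟨monomial σ 1, ?_, ?_, ?_, ?_⟩
    · rw [Jtil_eq hin, monomial_mem_MIdeal]
      exact ⟨Finsupp.erase u μ, ⟨μ, hLM, hμlow, rfl⟩, herase⟩
    · rw [MvPolynomial.mem_supported, MvPolynomial.vars_monomial (one_ne_zero)]
      intro j hj
      rw [Finset.mem_coe, Finsupp.mem_support_iff] at hj
      simp only [Set.mem_setOf_eq]
      by_contra hc
      exact hj (hlow j (by omega))
    · exact hd ▸ isHom_monomial σ 1
    · rw [Jlow_eq, monomial_mem_MIdeal]
      rintro ⟨μ', ⟨hLM', hlow'⟩, hle'⟩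
      exact hnot ⟨μ', hLM', hlow', hle'⟩
  · rintro ⟨f, hft, hfs, hfh, hfl⟩
    rw [Jtil_eq hin, mem_MIdeal_iff] at hft
    rw [Jlow_eq, mem_MIdeal_iff] at hfl
    push_neg at hfl
    obtain ⟨σ, hσ, hno⟩ := hfl
    obtain ⟨b, ⟨μ, hLM, hμlow, rfl⟩, hb⟩ := hft σ hσ
    have hlowσ : ∀ w : Fin n, n - i ≤ (w:ℕ) → σ w = 0 := by
      intro w hw
      by_contra hc
      have hv : w ∈ f.vars := (MvPolynomial.mem_vars w).mpr ⟨σ, hσ, Finsupp.mem_support_iff.mpr hc⟩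
      have := (MvPolynomial.mem_supported).mp hfs hv
      simp only [Set.mem_setOf_eq] at this
      omega
    refine ⟨σ, isHom_iff.mp hfh σ hσ, hlowσ, ⟨μ, hLM, hμlow, hb⟩, ?_⟩
    rintro ⟨μ', hLM', hlow', hle'⟩
    exact hno μ' ⟨hLM', hlow'⟩ hle'

lemma sSup_natW_lt_top {Q : ℕ → Prop} :
    sSup {x : WithBot ℕ∞ | ∃ r : ℕ, x = natW r ∧ Q r} < ⊤ ↔ ∃ R : ℕ, ∀ r, Q r → r ≤ R := by
  set S := {x : WithBot ℕ∞ | ∃ r : ℕ, x = natW r ∧ Q r} with hS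
  constructor
  · intro h
    by_cases hbot : sSup S = ⊥
    · refine ⟨0, fun r hr => ?_⟩
      have h1 : natW r ≤ sSup S := le_sSup ⟨r, rfl, hr⟩
      rw [hbot, le_bot_iff] at h1
      exact absurd h1 (by simp [natW])
    · obtain ⟨e, he⟩ := WithBot.ne_bot_iff_exists.mp hbot
      have hetop : e ≠ ⊤ := by
        intro hc
        subst hc
        rw [← he] at h
        exact absurd h (by simp)
      obtain ⟨m, rfl⟩ := WithTop.ne_top_iff_exists.mp hetop
      refine ⟨m, fun r hr => ?_⟩
      have h1 : natW r ≤ sSup S := le_sSup ⟨r, rfl, hr⟩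
      rw [← he] at h1
      have : ((r : ℕ∞) : WithBot ℕ∞) ≤ ((m : ℕ∞) : WithBot ℕ∞) := h1
      exact_mod_cast this
  · rintro ⟨R, hR⟩
    refine lt_of_le_of_lt (sSup_le ?_) (show natW R < ⊤ from ?_)
    · rintro x ⟨r, rfl, hr⟩
      show ((r : ℕ∞) : WithBot ℕ∞) ≤ ((R : ℕ∞) : WithBot ℕ∞)
      exact_mod_cast hR r hr
    · rw [lt_top_iff_ne_top]
      exact ne_of_lt (WithBot.coe_lt_coe.mpr (ENat.coe_lt_top R))

lemma stab_iff {I : Ideal (MvPolynomial (Fin n) k)} (hI : HomogIdeal I) {i : ℕ} (hin : i < n) :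
    StabCol (I ⊔ MIdeal k (Bset n i)) (⟨n - i - 1, by omega⟩ : Fin n) ↔
      ∃ r0 : ℕ, ∀ r, r0 ≤ r → ¬ cwWit I i r (⟨n - i - 1, by omega⟩ : Fin n) := by
  set u : Fin n := ⟨n - i - 1, by omega⟩ with hu
  set P : Ideal (MvPolynomial (Fin n) k) := I ⊔ MIdeal k (Bset n i) with hPdef
  have hPhom : HomogIdeal P := hI.sup (HomogIdeal.mIdeal _)
  have hvars : ∀ w : Fin n, u < w → X w ∈ P := by
    intro w hw
    refine X_mem_of_Bset ?_
    have : (u:ℕ) < (w:ℕ) := hw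
    simp only [hu] at this
    omega
  have hInP : initialIdeal P = initialIdeal I ⊔ MIdeal k (Bset n i) :=
    initial_Q hI i (by omega)
  have hkey : ∀ r : ℕ, (∀ f : MvPolynomial (Fin n) k, f.IsHomogeneous r →
      f ∈ P.colon (Ideal.span {(X u : MvPolynomial (Fin n) k)}) → f ∈ P) ↔ ¬ cwWit I i r u := by
    intro r
    rw [graded_eq_iff_initial (hPhom.colonX u) hPhom (le_colonX P u) r]
    constructor
    · rintro h ⟨σ, hd, h1, h2⟩
      apply h2
      refine (MQ_iff i σ).mp ?_
      rw [← hInP]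
      refine h σ hd ?_
      rw [initial_colon u hPhom hvars σ, hInP]
      exact (MQ_iff i _).mpr h1
    · intro hncw ν hd hν
      rw [initial_colon u hPhom hvars ν, hInP] at hν
      by_contra h2
      refine hncw ⟨ν, hd, (MQ_iff i _).mp hν, fun hq => h2 ?_⟩
      rw [hInP]
      exact (MQ_iff i _).mpr hq
  constructor
  · rintro ⟨r0, h⟩
    exact ⟨r0, fun r hr => (hkey r).mp (fun f hf hfc => h r hr f hf hfc)⟩
  · rintro ⟨r0, h⟩
    exact ⟨r0, fun r hr f hf hfc => (hkey r).mpr (h r hr) f hf hfc⟩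

lemma per_index {I : Ideal (MvPolynomial (Fin n) k)} (hI : HomogIdeal I) {t : ℕ} (ht : t < n)
    {i : ℕ} (hit : i ≤ t) :
    (∀ p : Ideal (MvPolynomial (Fin n) k),
      IsAssociatedPrime p (MvPolynomial (Fin n) k ⧸ partIdeal I (fun j : Fin (t+1) =>
        (X ⟨n - 1 - (j : ℕ), by omega⟩ : MvPolynomial (Fin n) k)) i) →
      p ≠ maxIdl k n →
      (X (⟨n - i - 1, by omega⟩ : Fin n) : MvPolynomial (Fin n) k) ∉ p) ↔ cInv i I < ⊤ := by
  have hin : i < n := by omega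
  set u : Fin n := ⟨n - i - 1, by omega⟩ with hu
  set P : Ideal (MvPolynomial (Fin n) k) := I ⊔ MIdeal k (Bset n i) with hPdef
  have hPeq := partIdeal_eq ht I i hit
  have hPhom : HomogIdeal P := hI.sup (HomogIdeal.mIdeal _)
  have hcInv : cInv i I < ⊤ ↔ ∃ R : ℕ, ∀ r, mwWit I i r u → r ≤ R := by
    unfold cInv
    rw [sSup_natW_lt_top]
    exact exists_congr fun R => forall_congr' fun r =>
      imp_congr ((mw_iff_fw hin).symm) Iff.rfl
  have hmain : StabCol P u ↔ (∃ R : ℕ, ∀ r, mwWit I i r u → r ≤ R) := by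
    rw [hPdef, stab_iff hI hin]
    constructor
    · rintro ⟨r0, h⟩
      refine ⟨r0, fun r hmw => ?_⟩
      by_contra hc
      push_neg at hc
      obtain ⟨c, hcw⟩ := mw_to_cw hin hmw
      exact h (r + c) (by omega) hcw
    · rintro ⟨R, h⟩
      refine ⟨R + 1, fun r hr hcw => ?_⟩
      have := h r (cw_to_mw hin hcw)
      omega
  rw [hcInv, ← hmain]
  constructor
  · intro hreg
    refine stabCol_of_filterReg hPhom u ?_
    intro p hp hpne
    rw [hPdef, ← hPeq] at hp
    exact hreg p hp hpne
  · intro hst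
    intro p hp hpne
    rw [hPeq, ← hPdef] at hp
    exact filterReg_of_stabCol hPhom u hst p hp hpne

end Stage10b
/-- Corollary 3.3: `xₙ, x_{n-1}, …, x_{n-t}` is a filter-regular
sequence for `S/I` if and only if `c_i(I) < ∞` for all `i = 0, …, t`. -/
theorem stmt_5 {k : Type*} [Field k] {n : ℕ} (I : Ideal (MvPolynomial (Fin n) k))
    (hI : HomogIdeal I) (t : ℕ) (ht : t < n) :
    FilterRegular I (fun j : Fin (t + 1) =>
        (X ⟨n - 1 - (j : ℕ), by omega⟩ : MvPolynomial (Fin n) k))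
      ↔ ∀ i : Fin (t + 1), cInv (i : ℕ) I < ⊤ := by
  constructor
  · intro hreg i
    have hlt := i.isLt
    have hit : (i:ℕ) ≤ t := by omega
    refine (per_index hI ht hit).mp ?_
    intro p hp hpne
    have h1 := hreg i p hp hpne
    have he : (⟨n - (i:ℕ) - 1, by omega⟩ : Fin n) = ⟨n - 1 - (i:ℕ), by omega⟩ :=
      Fin.ext (by simp; omega)
    rw [he]
    exact h1
  · intro hc i p hp hpne
    have hlt := i.isLt
    have hit : (i:ℕ) ≤ t := by omega
    have h1 := (per_index hI ht hit).mpr (hc i) p hp hpne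
    have he : (⟨n - 1 - (i:ℕ), by omega⟩ : Fin n) = ⟨n - (i:ℕ) - 1, by omega⟩ :=
      Fin.ext (by simp; omega)
    show (X (⟨n - 1 - (i:ℕ), by omega⟩ : Fin n) : MvPolynomial (Fin n) k) ∉ p
    rw [he]
    exact h1
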